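/- arXiv:1910.13668 — 6 statements merged into one kernel-verified Lean document; each statement's English description precedes it below -/
import Mathlib

section
/- Let n ≥ 2, 1 ≤ j ≤ n and 0 < ε ≤ 1/n, and define c^{(j,ε)} ∈ Δ_n by c^{(j,ε)}_j = ε and c^{(j,ε)}_i = (1−ε)/(n−1) for i ≠ j. If p ∈ Δ̄_n satisfies 0 ≤ p_j ≤ ε, then ψ(p) ≤ n ψ(c^{(j,ε)}) for every continuous concave function ψ : Δ̄_n → [0, ∞). In particular, ψ(p) ≤ n ψ(ē) for all p ∈ Δ̄_n and all such ψ, where ē = (1/n, …, 1/n) is the barycenter of the simplex. -/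
/-- The open unit simplex `Δ_n = {p ∈ (0,1)^n : p_1 + ⋯ + p_n = 1}`. -/
def openSimplex (n : ℕ) : Set (Fin n → ℝ) :=
  {p | (∀ i, 0 < p i ∧ p i < 1) ∧ ∑ i, p i = 1}

/-- The closed unit simplex `Δ̄_n`, the closure of `Δ_n` in `ℝ^n`. -/
def closedSimplex (n : ℕ) : Set (Fin n → ℝ) :=
  {p | (∀ i, 0 ≤ p i) ∧ ∑ i, p i = 1}

lemma key_slice_bound (n : ℕ) (hn : 2 ≤ n)
    (ψ : (Fin n → ℝ) → ℝ)
    (hconc : ConcaveOn ℝ (closedSimplex n) ψ)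
    (hnonneg : ∀ p ∈ closedSimplex n, 0 ≤ ψ p)
    (j : Fin n) (ε : ℝ) (hε : 0 < ε) (hε' : ε ≤ 1 / n)
    (p : Fin n → ℝ) (hp : p ∈ closedSimplex n) (hpj : p j ≤ ε) :
    ψ p ≤ n * ψ (fun i => if i = j then ε else (1 - ε) / (n - 1)) := by
  classical
  have hnpos : (0:ℝ) < n := by
    have : (2:ℝ) ≤ n := by exact_mod_cast hn
    linarith
  have hn1 : (0:ℝ) < (n:ℝ) - 1 := by
    have : (2:ℝ) ≤ n := by exact_mod_cast hn
    linarith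
  have hεn : ε * n ≤ 1 := by
    have := (le_div_iff₀ hnpos).mp hε'
    linarith
  have hε1 : ε ≤ 1 := by nlinarith
  set c : Fin n → ℝ := fun i => if i = j then ε else (1 - ε) / (n - 1) with hc
  have hsumc : ∑ i, c i = 1 := by
    rw [← Finset.add_sum_erase _ _ (Finset.mem_univ j)]
    have h1 : ∀ i ∈ Finset.univ.erase j, c i = (1 - ε) / (n - 1) := by
      intro i hi
      simp [hc, Finset.mem_erase.mp hi |>.1]
    rw [Finset.sum_congr rfl h1, Finset.sum_const, Finset.card_erase_of_mem (Finset.mem_univ j)]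
    simp only [Finset.card_univ, Fintype.card_fin, nsmul_eq_mul, hc, if_pos rfl]
    have hcast : ((n - 1 : ℕ) : ℝ) = (n:ℝ) - 1 := by
      have : 1 ≤ n := by omega
      push_cast [this]; ring
    rw [hcast]
    field_simp
    ring
  have hcnn : ∀ i, 0 ≤ c i := by
    intro i
    by_cases h : i = j
    · simp only [hc, h, if_pos rfl]; linarith
    · simp only [hc, if_neg h]
      exact div_nonneg (by linarith) hn1.le
  have hcmem : c ∈ closedSimplex n := ⟨hcnn, hsumc⟩
  have hb : (0:ℝ) < 1 - 1/n := by
    rw [sub_pos, div_lt_one hnpos]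
    have : (2:ℝ) ≤ n := by exact_mod_cast hn
    linarith
  set q : Fin n → ℝ := fun i => (c i - (1/n) * p i) / (1 - 1/n) with hq
  have hple1 : ∀ i, p i ≤ 1 := by
    intro i
    have := Finset.single_le_sum (f := p) (fun k _ => hp.1 k) (Finset.mem_univ i)
    rw [hp.2] at this; exact this
  have hclow : (1:ℝ)/n ≤ (1 - ε) / (n - 1) := by
    rw [div_le_div_iff₀ hnpos hn1]
    nlinarith
  have hqnn : ∀ i, 0 ≤ q i := by
    intro i
    apply div_nonneg _ (le_of_lt hb)
    by_cases h : i = j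
    · subst h
      simp only [hc, if_pos rfl]
      have : (1/(n:ℝ)) * p i ≤ 1 * ε := by
        apply mul_le_mul _ hpj (hp.1 i) (by norm_num)
        rw [div_le_one hnpos]
        linarith
      linarith
    · simp only [hc, if_neg h]
      have : (1/(n:ℝ)) * p i ≤ (1/n) * 1 := by
        apply mul_le_mul_of_nonneg_left (hple1 i) (by positivity)
      linarith [hclow]
  have hsumq : ∑ i, q i = 1 := by
    simp only [hq]
    rw [← Finset.sum_div]
    rw [Finset.sum_sub_distrib, ← Finset.mul_sum, hsumc, hp.2]
    field_simp
  have hqmem : q ∈ closedSimplex n := ⟨hqnn, hsumq⟩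
  have hcomb : (1/(n:ℝ)) • p + ((1:ℝ) - 1/n) • q = c := by
    funext i
    simp only [Pi.add_apply, Pi.smul_apply, smul_eq_mul, hq]
    field_simp
    ring
  have hconcave := hconc.2 hp hqmem (show (0:ℝ) ≤ 1/(n:ℝ) by positivity) hb.le
    (by ring : 1/(n:ℝ) + ((1:ℝ) - 1/(n:ℝ)) = 1)
  rw [hcomb] at hconcave
  simp only [smul_eq_mul] at hconcave
  have hψq : 0 ≤ ψ q := hnonneg q hqmem
  have h1 : (1/(n:ℝ)) * ψ p ≤ ψ c := by nlinarith
  have := mul_le_mul_of_nonneg_left h1 (le_of_lt hnpos)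
  have heq : (n:ℝ) * ((1/n) * ψ p) = ψ p := by field_simp
  rw [heq] at this
  exact this

/-- for `1 ≤ j ≤ n` and `0 < ε ≤ 1/n`, with `c^{(j,ε)}` the center of the
slice `p_j = ε`, every continuous nonnegative concave `ψ` on `Δ̄_n` satisfies
`ψ(p) ≤ n ψ(c^{(j,ε)})` whenever `p ∈ Δ̄_n` has `p_j ≤ ε`; in particular
`ψ(p) ≤ n ψ(ē)` for all `p ∈ Δ̄_n`, where `ē` is the barycenter. -/
theorem concave_bound_slice_center (n : ℕ) (hn : 2 ≤ n) (j : Fin n)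
    (ε : ℝ) (hε : 0 < ε) (hε' : ε ≤ 1 / n)
    (ψ : (Fin n → ℝ) → ℝ)
    (hcont : ContinuousOn ψ (closedSimplex n))
    (hconc : ConcaveOn ℝ (closedSimplex n) ψ)
    (hnonneg : ∀ p ∈ closedSimplex n, 0 ≤ ψ p)
    (p : Fin n → ℝ) (hp : p ∈ closedSimplex n) (hpj : p j ≤ ε) :
    ψ p ≤ n * ψ (fun i => if i = j then ε else (1 - ε) / (n - 1)) ∧
    ∀ p' ∈ closedSimplex n, ψ p' ≤ n * ψ (fun _ => 1 / n) := by
  have hnpos : (0:ℝ) < n := by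
    have : (2:ℝ) ≤ n := by exact_mod_cast hn
    linarith
  constructor
  · exact key_slice_bound n hn ψ hconc hnonneg j ε hε hε' p hp hpj
  · intro p' hp'
    have hne : Nonempty (Fin n) := ⟨⟨0, by omega⟩⟩
    -- there exists j' with p' j' ≤ 1/n
    obtain ⟨j', hj'⟩ : ∃ j', p' j' ≤ 1 / n := by
      by_contra h
      push_neg at h
      have : (1:ℝ) < ∑ i, p' i := by
        calc (1:ℝ) = ∑ _i : Fin n, (1/n : ℝ) := by
              rw [Finset.sum_const, Finset.card_univ, Fintype.card_fin, nsmul_eq_mul]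
              field_simp
          _ < ∑ i, p' i := Finset.sum_lt_sum_of_nonempty Finset.univ_nonempty (fun i _ => h i)
      rw [hp'.2] at this; linarith
    have hkey := key_slice_bound n hn ψ hconc hnonneg j' (1/n) (by positivity) le_rfl p' hp' hj'
    have hceq : (fun i => if i = j' then (1:ℝ)/n else (1 - 1/n) / (n - 1)) = (fun _ => (1:ℝ)/n) := by
      funext i
      split_ifs with h
      · rfl
      · have hn1 : (n:ℝ) - 1 ≠ 0 := by
          have : (2:ℝ) ≤ n := by exact_mod_cast hn
          intro h; linarith
        field_simp
    rw [hceq] at hkey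
    exact hkey
end

section
/- Let n ≥ 2 and M ≥ 0. Then every sequence (ψ_k) of continuous concave functions ψ_k : Δ̄_n → [0, M] has a subsequence that converges, uniformly on every compact subset of Δ_n, to a continuous concave function ψ : Δ̄_n → [0, M]. Equivalently, the set {ψ ∈ C : ψ ≤ M} is compact in the topology of uniform convergence on compact subsets of Δ_n. -/
open Filter Topology

noncomputable def lifBCF (u : ℕ → ℝ) : ℝ := ⨆ m, ⨅ k, u (m + k)

section lif
variable {M : ℝ} {u v w : ℕ → ℝ}

lemma lifA_bdd (hu : ∀ k, u k ∈ Set.Icc 0 M) (m : ℕ) :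
    (⨅ k, u (m + k)) ∈ Set.Icc (0:ℝ) M := by
  constructor
  · exact le_ciInf fun k => (hu (m+k)).1
  · exact le_trans (ciInf_le ⟨0, by rintro x ⟨k, rfl⟩; exact (hu _).1⟩ 0) (hu (m+0)).2

lemma lifA_mono (hu : ∀ k, u k ∈ Set.Icc 0 M) : Monotone (fun m => ⨅ k, u (m + k)) := by
  refine monotone_nat_of_le_succ fun m => ?_
  refine le_ciInf fun k => ?_
  have : m + (1 + k) = m + 1 + k := by omega
  exact le_trans (ciInf_le ⟨0, by rintro x ⟨j, rfl⟩; exact (hu _).1⟩ (1 + k)) (by rw [this])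

lemma lif_bddAbove (hu : ∀ k, u k ∈ Set.Icc 0 M) :
    BddAbove (Set.range fun m => ⨅ k, u (m + k)) :=
  ⟨M, by rintro x ⟨m, rfl⟩; exact (lifA_bdd hu m).2⟩

lemma lif_mem (hu : ∀ k, u k ∈ Set.Icc 0 M) : lifBCF u ∈ Set.Icc 0 M := by
  constructor
  · exact le_trans (lifA_bdd hu 0).1 (le_ciSup (lif_bddAbove hu) 0)
  · exact ciSup_le fun m => (lifA_bdd hu m).2

lemma lifA_le_lif (hu : ∀ k, u k ∈ Set.Icc 0 M) (m : ℕ) :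
    (⨅ k, u (m + k)) ≤ lifBCF u := le_ciSup (lif_bddAbove hu) m

lemma lif_combo (hu : ∀ k, u k ∈ Set.Icc 0 M) (hv : ∀ k, v k ∈ Set.Icc 0 M)
    (hw : ∀ k, w k ∈ Set.Icc 0 M) {a b : ℝ} (ha : 0 ≤ a) (hb : 0 ≤ b)
    (h : ∀ k, a * v k + b * w k ≤ u k) :
    a * lifBCF v + b * lifBCF w ≤ lifBCF u := by
  refine le_of_forall_pos_le_add fun ε hε => ?_
  have hε' : 0 < ε / (a + b + 1) := by positivity
  obtain ⟨m1, hm1⟩ : ∃ m, lifBCF v - ε / (a+b+1) < ⨅ k, v (m + k) := by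
    by_contra hcon
    push_neg at hcon
    have : lifBCF v ≤ lifBCF v - ε / (a+b+1) := ciSup_le hcon
    linarith
  obtain ⟨m2, hm2⟩ : ∃ m, lifBCF w - ε / (a+b+1) < ⨅ k, w (m + k) := by
    by_contra hcon
    push_neg at hcon
    have : lifBCF w ≤ lifBCF w - ε / (a+b+1) := ciSup_le hcon
    linarith
  set m := max m1 m2
  have h1 : lifBCF v - ε/(a+b+1) < ⨅ k, v (m + k) :=
    lt_of_lt_of_le hm1 (lifA_mono hv (le_max_left _ _))
  have h2 : lifBCF w - ε/(a+b+1) < ⨅ k, w (m + k) :=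
    lt_of_lt_of_le hm2 (lifA_mono hw (le_max_right _ _))
  have h3 : a * (⨅ k, v (m + k)) + b * (⨅ k, w (m + k)) ≤ ⨅ k, u (m + k) := by
    refine le_ciInf fun k => ?_
    have hv' : (⨅ k, v (m + k)) ≤ v (m + k) := ciInf_le ⟨0, by rintro x ⟨j, rfl⟩; exact (hv _).1⟩ k
    have hw' : (⨅ k, w (m + k)) ≤ w (m + k) := ciInf_le ⟨0, by rintro x ⟨j, rfl⟩; exact (hw _).1⟩ k
    nlinarith [h (m + k)]
  have h4 := lifA_le_lif hu m
  have hab : (a + b) * (ε / (a+b+1)) ≤ ε := by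
    rw [div_eq_mul_inv, ← mul_assoc]
    rw [mul_inv_le_iff₀ (show (0:ℝ) < a+b+1 by linarith)]
    nlinarith
  nlinarith [mul_le_mul_of_nonneg_left h1.le ha, mul_le_mul_of_nonneg_left h2.le hb]
end lif

section lif2
variable {M : ℝ} {u v : ℕ → ℝ}

lemma lif_of_tendsto (hu : ∀ k, u k ∈ Set.Icc 0 M) {l : ℝ}
    (hl : Filter.Tendsto u Filter.atTop (𝓝 l)) : lifBCF u = l := by
  have key : ∀ ε : ℝ, 0 < ε → l - ε ≤ lifBCF u ∧ lifBCF u ≤ l + ε := by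
    intro ε hε
    obtain ⟨N, hN⟩ := (Metric.tendsto_atTop.1 hl) ε hε
    have hN' : ∀ k ≥ N, l - ε ≤ u k ∧ u k ≤ l + ε := by
      intro k hk
      have := hN k hk
      rw [Real.dist_eq, abs_lt] at this
      constructor <;> linarith
    constructor
    · refine le_trans ?_ (lifA_le_lif hu N)
      exact le_ciInf fun k => (hN' (N + k) (by omega)).1
    · refine ciSup_le fun m => ?_
      refine le_trans (ciInf_le ⟨0, by rintro x ⟨j, rfl⟩; exact (hu _).1⟩ N) ?_
      exact (hN' (m + N) (by omega)).2
  have h1 : l ≤ lifBCF u := by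
    refine le_of_forall_pos_le_add fun ε hε => ?_
    linarith [(key ε hε).1]
  have h2 : lifBCF u ≤ l := by
    refine le_of_forall_pos_le_add fun ε hε => ?_
    linarith [(key ε hε).2]
  linarith

lemma lif_exists_le (hu : ∀ k, u k ∈ Set.Icc 0 M) {ε : ℝ} (hε : 0 < ε) (m : ℕ) :
    ∃ k, m ≤ k ∧ u k < lifBCF u + ε := by
  have h1 : (⨅ k, u (m + k)) < lifBCF u + ε :=
    lt_of_le_of_lt (lifA_le_lif hu m) (by linarith)
  obtain ⟨k, hk⟩ := exists_lt_of_ciInf_lt h1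
  exact ⟨m + k, by omega, hk⟩

lemma lif_le_add (hu : ∀ k, u k ∈ Set.Icc 0 M) (hv : ∀ k, v k ∈ Set.Icc 0 M)
    {c : ℝ} (h : ∀ k, u k ≤ v k + c) : lifBCF u ≤ lifBCF v + c := by
  refine ciSup_le fun m => ?_
  have h1 : (⨅ k, u (m + k)) - c ≤ ⨅ k, v (m + k) := by
    refine le_ciInf fun k => ?_
    have := ciInf_le (f := fun k => u (m + k)) ⟨0, by rintro x ⟨j, rfl⟩; exact (hu _).1⟩ k
    have := h (m + k)
    linarith
  linarith [lifA_le_lif hv m]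
end lif2

section geom
variable {n : ℕ}

lemma openBCF_subset : openSimplex n ⊆ closedSimplex n := by
  rintro p ⟨h1, h2⟩
  exact ⟨fun i => (h1 i).1.le, h2⟩

lemma convexBCF : Convex ℝ (closedSimplex n) := by
  rintro x ⟨hx1, hx2⟩ y ⟨hy1, hy2⟩ a b ha hb hab
  constructor
  · intro i
    have := hx1 i; have := hy1 i
    simp only [Pi.add_apply, Pi.smul_apply, smul_eq_mul]
    nlinarith
  · simp only [Pi.add_apply, Pi.smul_apply, smul_eq_mul, Finset.sum_add_distrib,
      ← Finset.mul_sum, hx2, hy2]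
    linarith

lemma combBCF_mem (hn : 2 ≤ n) {x : Fin n → ℝ} (hx : x ∈ closedSimplex n)
    {t : ℝ} (ht0 : 0 < t) (ht1 : t ≤ 1) :
    (1 - t) • x + t • (fun _ => (n:ℝ)⁻¹) ∈ openSimplex n := by
  have hn0 : (0:ℝ) < n := by positivity
  have hn2 : (2:ℝ) ≤ n := by exact_mod_cast hn
  obtain ⟨hx1, hx2⟩ := hx
  constructor
  · intro i
    have hxi := hx1 i
    have hxile : x i ≤ 1 := by
      have : ∀ j ∈ Finset.univ, 0 ≤ x j := fun j _ => hx1 j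
      calc x i ≤ ∑ j, x j := Finset.single_le_sum this (Finset.mem_univ i)
        _ = 1 := hx2
    have hinv : (n:ℝ)⁻¹ ≤ 1/2 := by
      rw [inv_le_iff_one_le_mul₀ hn0]  -- may fail
      nlinarith
    have hinvpos : (0:ℝ) < (n:ℝ)⁻¹ := by positivity
    simp only [Pi.add_apply, Pi.smul_apply, smul_eq_mul]
    constructor
    · nlinarith
    · nlinarith
  · simp only [Pi.add_apply, Pi.smul_apply, smul_eq_mul, Finset.sum_add_distrib,
      ← Finset.mul_sum, hx2, Finset.sum_const, Finset.card_univ, Fintype.card_fin,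
      nsmul_eq_mul]
    rw [mul_inv_cancel₀ (ne_of_gt hn0)]
    ring
end geom

lemma lipBCF {n : ℕ} {M : ℝ} (hM : 0 ≤ M) {f : (Fin n → ℝ) → ℝ}
    (hconc : ConcaveOn ℝ (closedSimplex n) f)
    (hbdd : ∀ p ∈ closedSimplex n, f p ∈ Set.Icc 0 M)
    {ε : ℝ} (hε : 0 < ε) {x y : Fin n → ℝ} (hx : x ∈ closedSimplex n)
    (hy : y ∈ closedSimplex n) (hyε : ∀ i, ε ≤ y i) :
    f x - f y ≤ M / ε * ‖x - y‖ := by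
  rcases eq_or_ne x y with rfl | hne
  · simp
  set r := ‖y - x‖ with hr
  have hr0 : 0 < r := by
    rw [hr, norm_pos_iff]
    exact sub_ne_zero.2 (Ne.symm hne)
  set z := y + (ε / r) • (y - x) with hz
  have hcoord : ∀ i, |y i - x i| ≤ r := by
    intro i
    have := norm_le_pi_norm (y - x) i
    simpa [Real.norm_eq_abs] using this
  have hzmem : z ∈ closedSimplex n := by
    constructor
    · intro i
      have h1 : (ε / r) * (y i - x i) ≥ -ε := by
        have h2 : (ε / r) * |y i - x i| ≤ (ε / r) * r := by
          apply mul_le_mul_of_nonneg_left (hcoord i) (by positivity)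
        have h3 : (ε / r) * r = ε := by field_simp
        have h4 : -((ε / r) * (y i - x i)) ≤ (ε/r) * |y i - x i| := by
          rw [← mul_neg]
          apply mul_le_mul_of_nonneg_left (neg_le_abs _) (by positivity)
        linarith
      have := hyε i
      simp only [hz, Pi.add_apply, Pi.smul_apply, Pi.sub_apply, smul_eq_mul]
      linarith
    · have : ∑ i, z i = ∑ i, y i + (ε / r) * (∑ i, y i - ∑ i, x i) := by
        simp only [hz, Pi.add_apply, Pi.smul_apply, Pi.sub_apply, smul_eq_mul,
          Finset.sum_add_distrib, ← Finset.mul_sum, Finset.sum_sub_distrib]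
      rw [this, hx.2, hy.2]
      ring
  set t := r / (r + ε) with ht
  have ht0 : 0 ≤ t := by positivity
  have ht1 : t < 1 := by
    rw [ht, div_lt_one (by linarith)]
    linarith
  have hcomb : y = (1 - t) • x + t • z := by
    funext i
    simp only [hz, Pi.add_apply, Pi.smul_apply, Pi.sub_apply, smul_eq_mul, ht]
    field_simp
    ring
  have hcc := hconc.2 hx hzmem (by linarith : (0:ℝ) ≤ 1 - t) ht0 (by ring)
  rw [← hcomb] at hcc
  simp only [smul_eq_mul] at hcc
  have hfx := hbdd x hx
  have hfz := hbdd z hzmem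
  have htr : t ≤ r / ε := by
    rw [ht, div_le_div_iff₀ (by linarith) hε]
    nlinarith
  have hnorm : ‖x - y‖ = r := by rw [hr, norm_sub_rev]
  rw [hnorm]
  have : f x - f y ≤ t * M := by nlinarith [hfx.2, hfz.1]
  have h2 : t * M ≤ M / ε * r := by
    have := mul_le_mul_of_nonneg_right htr hM
    calc t * M ≤ r / ε * M := this
      _ = M / ε * r := by ring
  linarith


set_option maxHeartbeats 2000000 in
/-- every sequence of continuous concave functions `Δ̄_n → [0, M]` has a
subsequence converging, uniformly on every compact subset of `Δ_n`, to a continuous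
concave function `Δ̄_n → [0, M]`; i.e. `{ψ ∈ C : ψ ≤ M}` is compact in the topology of
uniform convergence on compact subsets of `Δ_n`. -/
theorem bounded_concave_functions_compact (n : ℕ) (hn : 2 ≤ n) (M : ℝ) (hM : 0 ≤ M)
    (ψ : ℕ → (Fin n → ℝ) → ℝ)
    (hcont : ∀ k, ContinuousOn (ψ k) (closedSimplex n))
    (hconc : ∀ k, ConcaveOn ℝ (closedSimplex n) (ψ k))
    (hbdd : ∀ k, ∀ p ∈ closedSimplex n, ψ k p ∈ Set.Icc 0 M) :
    ∃ φ : ℕ → ℕ, StrictMono φ ∧ ∃ ψlim : (Fin n → ℝ) → ℝ,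
      ContinuousOn ψlim (closedSimplex n) ∧
      ConcaveOn ℝ (closedSimplex n) ψlim ∧
      (∀ p ∈ closedSimplex n, ψlim p ∈ Set.Icc 0 M) ∧
      ∀ K : Set (Fin n → ℝ), IsCompact K → K ⊆ openSimplex n →
        TendstoUniformlyOn (fun k => ψ (φ k)) ψlim Filter.atTop K := by
  classical
  have hn0 : (0:ℝ) < n := by positivity
  have hn2 : (2:ℝ) ≤ n := by exact_mod_cast hn
  -- the center of the simplex
  set c : Fin n → ℝ := fun _ => (n:ℝ)⁻¹ with hc_def
  have hcS : c ∈ closedSimplex n := by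
    constructor
    · intro i; positivity
    · simp [hc_def, Finset.sum_const, Finset.card_univ]
      rw [mul_inv_cancel₀ (ne_of_gt hn0)]
  have hcO : c ∈ openSimplex n := by
    have := combBCF_mem hn hcS (t := 1) one_pos le_rfl
    simpa using this
  -- the approach-to-center sequence
  set tk : ℕ → ℝ := fun k => ((k:ℝ) + 2)⁻¹ with htk_def
  have htk0 : ∀ k, 0 < tk k := fun k => by positivity
  have htk1 : ∀ k, tk k ≤ 1 := by
    intro k
    rw [htk_def]
    rw [inv_le_one_iff₀]
    right; exact by push_cast; linarith [Nat.cast_nonneg (α := ℝ) k]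
  have htkto : Filter.Tendsto tk Filter.atTop (𝓝 0) := by
    have h1 : Filter.Tendsto (fun k : ℕ => (k:ℝ) + 2) Filter.atTop Filter.atTop :=
      Filter.tendsto_atTop_add_const_right _ 2 tendsto_natCast_atTop_atTop
    exact tendsto_inv_atTop_zero.comp h1
  set seg : (Fin n → ℝ) → ℕ → (Fin n → ℝ) := fun p k => (1 - tk k) • p + tk k • c with hseg_def
  have hsegO : ∀ p ∈ closedSimplex n, ∀ k, seg p k ∈ openSimplex n := by
    intro p hp k
    exact combBCF_mem hn hp (htk0 k) (htk1 k)
  have hsegS : ∀ p ∈ closedSimplex n, ∀ k, seg p k ∈ closedSimplex n := by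
    intro p hp k
    exact openBCF_subset (hsegO p hp k)
  have hsegto : ∀ p : Fin n → ℝ, Filter.Tendsto (seg p) Filter.atTop (𝓝 p) := by
    intro p
    have heq : seg p = fun k => p + tk k • (c - p) := by
      funext k i
      simp only [hseg_def, Pi.add_apply, Pi.smul_apply, Pi.sub_apply, smul_eq_mul]
      ring
    rw [heq]
    have h1 : Filter.Tendsto (fun k => tk k • (c - p)) Filter.atTop (𝓝 ((0:ℝ) • (c - p))) :=
      htkto.smul_const (c - p)
    rw [zero_smul] at h1
    simpa using (tendsto_const_nhds (x := p)).add h1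
  have hsegdist : ∀ p : Fin n → ℝ, Filter.Tendsto (fun k => ‖seg p k - p‖) Filter.atTop (𝓝 0) := by
    intro p
    have := (hsegto p).sub (tendsto_const_nhds (x := p))
    rw [sub_self] at this
    simpa using this.norm
  -- a countable dense family in the open simplex
  obtain ⟨D0, hD0c, hD0d⟩ := TopologicalSpace.exists_countable_dense (openSimplex n)
  haveI : Nonempty (openSimplex n) := ⟨⟨c, hcO⟩⟩
  have hD0ne : D0.Nonempty := hD0d.nonempty
  obtain ⟨Dm0, hDm0⟩ := Set.Countable.exists_eq_range hD0c hD0ne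
  have hDmdense : ∀ q ∈ openSimplex n, ∀ η : ℝ, 0 < η → ∃ m, dist q ((Dm0 m : Fin n → ℝ)) < η := by
    intro q hq η hη
    have hdr : DenseRange Dm0 := by rw [DenseRange, ← hDm0]; exact hD0d
    obtain ⟨m, hm⟩ := hdr.exists_dist_lt ⟨q, hq⟩ hη
    exact ⟨m, by rwa [Subtype.dist_eq] at hm⟩
  set Dm : ℕ → (Fin n → ℝ) := fun m => (Dm0 m : Fin n → ℝ) with hDm_def
  have hDmO : ∀ m, Dm m ∈ openSimplex n := fun m => (Dm0 m).2
  have hDmS : ∀ m, Dm m ∈ closedSimplex n := fun m => openBCF_subset (hDmO m)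
  -- extract a subsequence converging at each Dm
  set F : ℕ → (ℕ → Set.Icc (0:ℝ) M) := fun k m => ⟨ψ k (Dm m), hbdd k _ (hDmS m)⟩ with hF_def
  obtain ⟨a, φ, hφ, hconv⟩ := CompactSpace.tendsto_subseq F
  have hD : ∀ m, Filter.Tendsto (fun k => ψ (φ k) (Dm m)) Filter.atTop (𝓝 (a m : ℝ)) := by
    intro m
    have h1 : Filter.Tendsto (fun k => F (φ k) m) Filter.atTop (𝓝 (a m)) :=
      (tendsto_pi_nhds.1 hconv) m
    exact (continuous_subtype_val.tendsto _).comp h1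
  refine ⟨φ, hφ, ?_⟩
  -- the pointwise liminf of the subsequence
  set u : (Fin n → ℝ) → ℕ → ℝ := fun p k => ψ (φ k) p with hu_def
  have hub : ∀ p ∈ closedSimplex n, ∀ k, u p k ∈ Set.Icc 0 M := fun p hp k => hbdd (φ k) p hp
  set ψ0 : (Fin n → ℝ) → ℝ := fun p => lifBCF (u p) with hψ0_def
  have hψ0mem : ∀ p ∈ closedSimplex n, ψ0 p ∈ Set.Icc 0 M := fun p hp => lif_mem (hub p hp)
  have hψ0conc : ConcaveOn ℝ (closedSimplex n) ψ0 := by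
    refine ⟨convexBCF, fun x hx y hy a' b' ha' hb' hab' => ?_⟩
    have hxy : a' • x + b' • y ∈ closedSimplex n := convexBCF hx hy ha' hb' hab'
    have := lif_combo (hub _ hxy) (hub x hx) (hub y hy) ha' hb'
      (fun k => by simpa [smul_eq_mul] using (hconc (φ k)).2 hx hy ha' hb' hab')
    simpa [smul_eq_mul] using this
  -- Lipschitz bounds away from the boundary
  have hψklip : ∀ (k : ℕ) {ε : ℝ}, 0 < ε → ∀ x ∈ closedSimplex n, ∀ y ∈ closedSimplex n,
      (∀ i, ε ≤ y i) → ψ (φ k) x - ψ (φ k) y ≤ M / ε * ‖x - y‖ := by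
    intro k ε hε x hx y hy hyε
    exact lipBCF hM (hconc (φ k)) (hbdd (φ k)) hε hx hy hyε
  have hψ0lip : ∀ {ε : ℝ}, 0 < ε → ∀ x ∈ closedSimplex n, ∀ y ∈ closedSimplex n,
      (∀ i, ε ≤ y i) → ψ0 x - ψ0 y ≤ M / ε * ‖x - y‖ := by
    intro ε hε x hx y hy hyε
    have := lif_le_add (c := M / ε * ‖x - y‖) (hub x hx) (hub y hy)
      (fun k => by have := hψklip k hε x hx y hy hyε; simp only [hu_def]; linarith)
    linarith
  have hψ0lip2 : ∀ {ε : ℝ}, 0 < ε → ∀ x ∈ closedSimplex n, ∀ y ∈ closedSimplex n,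
      (∀ i, ε ≤ x i) → (∀ i, ε ≤ y i) → |ψ0 x - ψ0 y| ≤ M / ε * ‖x - y‖ := by
    intro ε hε x hx y hy hxε hyε
    rw [abs_sub_le_iff]
    constructor
    · exact hψ0lip hε x hx y hy hyε
    · rw [norm_sub_rev]; exact hψ0lip hε y hy x hx hxε
  -- pointwise convergence on the open simplex
  have hpt : ∀ q ∈ openSimplex n, Filter.Tendsto (u q) Filter.atTop (𝓝 (ψ0 q)) := by
    intro q hq
    have hqS : q ∈ closedSimplex n := openBCF_subset hq
    obtain ⟨i0⟩ : Nonempty (Fin n) := ⟨⟨0, by omega⟩⟩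
    obtain ⟨imin, _, himin⟩ := Finset.exists_min_image Finset.univ q ⟨i0, Finset.mem_univ i0⟩
    set ε0 : ℝ := q imin with hε0_def
    have hε0pos : 0 < ε0 := (hq.1 imin).1
    have hε0le : ∀ i, ε0 ≤ q i := fun i => himin i (Finset.mem_univ i)
    have hcauchy : CauchySeq (u q) := by
      rw [Metric.cauchySeq_iff]
      intro η hη
      set δ : ℝ := min (ε0 / 2) (η * ε0 / (16 * (M + 1))) with hδ_def
      have hδpos : 0 < δ := by
        apply lt_min (by linarith)
        positivity
      obtain ⟨m, hm⟩ := hDmdense q hq δ hδpos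
      set d : Fin n → ℝ := Dm m with hd_def
      have hdcoord : ∀ i, ε0 / 2 ≤ d i := by
        intro i
        have h1 : dist (q i) (d i) ≤ dist q d := dist_le_pi_dist q d i
        have h2 : |q i - d i| ≤ δ := by
          rw [← Real.dist_eq]
          exact le_trans h1 (le_of_lt hm)
        have h3 : δ ≤ ε0 / 2 := min_le_left _ _
        have := hε0le i
        rw [abs_le] at h2
        linarith [h2.1, h2.2]
      have hlipqd : ∀ k, |ψ (φ k) q - ψ (φ k) d| ≤ η / 4 := by
        intro k
        have hεhalf : (0:ℝ) < ε0 / 2 := by linarith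
        have hqco : ∀ i, ε0 / 2 ≤ q i := fun i => by linarith [hε0le i]
        have h1 : ψ (φ k) q - ψ (φ k) d ≤ M / (ε0/2) * ‖q - d‖ :=
          hψklip k hεhalf q hqS d (hDmS m) hdcoord
        have h2 : ψ (φ k) d - ψ (φ k) q ≤ M / (ε0/2) * ‖d - q‖ :=
          hψklip k hεhalf d (hDmS m) q hqS hqco
        rw [norm_sub_rev] at h2
        have h3 : ‖q - d‖ < δ := by rwa [← dist_eq_norm]
        have h4 : M / (ε0/2) * ‖q - d‖ ≤ η / 4 := by
          have h5 : δ ≤ η * ε0 / (16 * (M + 1)) := min_le_right _ _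
          have h6 : M / (ε0/2) * ‖q - d‖ ≤ M / (ε0/2) * δ := by
            apply mul_le_mul_of_nonneg_left (le_of_lt h3) (by positivity)
          have h7 : M / (ε0/2) * δ ≤ M / (ε0/2) * (η * ε0 / (16 * (M+1))) := by
            apply mul_le_mul_of_nonneg_left h5 (by positivity)
          have h8 : M / (ε0/2) * (η * ε0 / (16 * (M+1))) ≤ η / 4 := by
            rw [div_mul_div_comm, div_le_div_iff₀ (by positivity) (by norm_num : (0:ℝ) < 4)]
            nlinarith [mul_pos hη hε0pos, mul_nonneg (mul_nonneg hη.le hε0pos.le) hM]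
          linarith
        rw [abs_sub_le_iff]
        exact ⟨by linarith, by linarith⟩
      obtain ⟨N, hN⟩ := (Metric.tendsto_atTop.1 (hD m)) (η / 4)
        (by linarith)
      refine ⟨N, fun j hj k hk => ?_⟩
      have hNj := hN j hj
      have hNk := hN k hk
      rw [Real.dist_eq] at hNj hNk ⊢
      have e1 := hlipqd j
      have e2 := hlipqd k
      rw [abs_sub_lt_iff] at hNj hNk
      rw [abs_sub_le_iff] at e1 e2
      rw [abs_sub_lt_iff]
      simp only [hu_def, hd_def] at *
      constructor <;> [skip; skip] <;>
        (first
          | (have := e1.1; have := e1.2; have := e2.1; have := e2.2; linarith))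
    obtain ⟨l, hl⟩ := cauchySeq_tendsto_of_complete hcauchy
    have : ψ0 q = l := lif_of_tendsto (hub q hqS) hl
    rwa [this]
  -- the extension of ψ0 to the closed simplex via radial liminf
  set v : (Fin n → ℝ) → ℕ → ℝ := fun p k => ψ0 (seg p k) with hv_def
  have hvb : ∀ p ∈ closedSimplex n, ∀ k, v p k ∈ Set.Icc 0 M := fun p hp k =>
    hψ0mem _ (hsegS p hp k)
  set g : (Fin n → ℝ) → ℝ := fun p => lifBCF (v p) with hg_def
  have hgmem : ∀ p ∈ closedSimplex n, g p ∈ Set.Icc 0 M := fun p hp => lif_mem (hvb p hp)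
  -- g agrees with ψ0 on the open simplex
  have hgO : ∀ q ∈ openSimplex n, g q = ψ0 q := by
    intro q hq
    have hqS : q ∈ closedSimplex n := openBCF_subset hq
    obtain ⟨i0⟩ : Nonempty (Fin n) := ⟨⟨0, by omega⟩⟩
    obtain ⟨imin, _, himin⟩ := Finset.exists_min_image Finset.univ q ⟨i0, Finset.mem_univ i0⟩
    set ε1 : ℝ := min (q imin) (n:ℝ)⁻¹ with hε1_def
    have hε1pos : 0 < ε1 := lt_min (hq.1 imin).1 (by positivity)
    have hsegco : ∀ k, ∀ i, ε1 ≤ seg q k i := by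
      intro k i
      have h1 : ε1 ≤ q i := le_trans (min_le_left _ _) (himin i (Finset.mem_univ i))
      have h2 : ε1 ≤ (n:ℝ)⁻¹ := min_le_right _ _
      have h3 := htk0 k
      have h4 := htk1 k
      simp only [hseg_def, Pi.add_apply, Pi.smul_apply, smul_eq_mul, hc_def]
      nlinarith
    have hqco : ∀ i, ε1 ≤ q i := fun i =>
      le_trans (min_le_left _ _) (himin i (Finset.mem_univ i))
    have htend : Filter.Tendsto (v q) Filter.atTop (𝓝 (ψ0 q)) := by
      rw [tendsto_iff_dist_tendsto_zero]
      have hbound : ∀ k, dist (v q k) (ψ0 q) ≤ M / ε1 * ‖seg q k - q‖ := by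
        intro k
        rw [Real.dist_eq]
        have := hψ0lip2 hε1pos (seg q k) (hsegS q hqS k) q hqS (hsegco k) hqco
        simpa [hv_def] using this
      have hto : Filter.Tendsto (fun k => M / ε1 * ‖seg q k - q‖) Filter.atTop (𝓝 0) := by
        have := (hsegdist q).const_mul (M / ε1)
        simpa using this
      exact squeeze_zero (fun k => dist_nonneg) hbound hto
    exact lif_of_tendsto (hvb q hqS) htend
  -- g is concave
  have hgconc : ConcaveOn ℝ (closedSimplex n) g := by
    refine ⟨convexBCF, fun x hx y hy a' b' ha' hb' hab' => ?_⟩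
    have hxy : a' • x + b' • y ∈ closedSimplex n := convexBCF hx hy ha' hb' hab'
    have hsegcomb : ∀ k, seg (a' • x + b' • y) k = a' • seg x k + b' • seg y k := by
      intro k
      funext i
      simp only [hseg_def, Pi.add_apply, Pi.smul_apply, smul_eq_mul]
      linear_combination (-(tk k * c i)) * hab'
    have hkey : ∀ k, a' * v x k + b' * v y k ≤ v (a' • x + b' • y) k := by
      intro k
      have := hψ0conc.2 (hsegS x hx k) (hsegS y hy k) ha' hb' hab'
      simp only [hv_def, hsegcomb k, smul_eq_mul] at this ⊢
      exact this
    have := lif_combo (hvb _ hxy) (hvb x hx) (hvb y hy) ha' hb' hkey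
    simpa [smul_eq_mul] using this
  -- lower semicontinuity estimate
  have claim_lsc : ∀ ps ∈ closedSimplex n, ∀ δ : ℝ, 0 < δ → δ ≤ 1 →
      ∀ p ∈ closedSimplex n, (∀ i, (1 - δ) * ps i ≤ p i) → (1 - δ) * g ps ≤ g p := by
    intro ps hps δ hδ0 hδ1 p hp hco
    rcases eq_or_lt_of_le hδ1 with rfl | hδlt
    · simpa using (hgmem p hp).1
    · set r : Fin n → ℝ := δ⁻¹ • (p - (1 - δ) • ps) with hr_def
      have hrS : r ∈ closedSimplex n := by
        constructor
        · intro i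
          have := hco i
          simp only [hr_def, Pi.smul_apply, Pi.sub_apply, smul_eq_mul]
          have hinv : 0 ≤ δ⁻¹ := by positivity
          nlinarith
        · simp only [hr_def, Pi.smul_apply, Pi.sub_apply, smul_eq_mul]
          rw [← Finset.mul_sum, Finset.sum_sub_distrib, ← Finset.mul_sum, hp.2, hps.2]
          field_simp
          ring
      have hdecomp : p = (1 - δ) • ps + δ • r := by
        funext i
        simp only [hr_def, Pi.add_apply, Pi.smul_apply, Pi.sub_apply, smul_eq_mul]
        field_simp
        ring
      have hcc := hgconc.2 hps hrS (by linarith : (0:ℝ) ≤ 1 - δ) hδ0.le (by ring)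
      rw [← hdecomp] at hcc
      simp only [smul_eq_mul] at hcc
      have := (hgmem r hrS).1
      nlinarith
  -- upper semicontinuity estimate
  have claim_usc : ∀ ps ∈ closedSimplex n, ∀ k0 : ℕ, ∀ p ∈ closedSimplex n,
      (∀ i, p i - ps i ≤ tk k0 / n) → (1 - tk k0) * g p ≤ ψ0 (seg ps k0) := by
    intro ps hps k0 p hp hco
    set t : ℝ := tk k0 with ht_def
    have ht0 : 0 < t := htk0 k0
    have ht1 : t ≤ 1 := htk1 k0
    set w : Fin n → ℝ := seg ps k0 with hw_def
    have hwO : w ∈ openSimplex n := hsegO ps hps k0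
    have hwS : w ∈ closedSimplex n := openBCF_subset hwO
    set r : Fin n → ℝ := t⁻¹ • (w - (1 - t) • p) with hr_def
    have hrS : r ∈ closedSimplex n := by
      constructor
      · intro i
        have h1 := hco i
        have hwi : w i = (1 - t) * ps i + t * (n:ℝ)⁻¹ := by
          simp only [hw_def, hseg_def, Pi.add_apply, Pi.smul_apply, smul_eq_mul, hc_def,
            ht_def]
        have h2 : (1 - t) * (p i - ps i) ≤ t / n := by
          rcases le_or_gt (p i - ps i) 0 with hd | hd
          · have hpos : 0 < t / n := by positivity
            nlinarith [mul_nonneg (by linarith : (0:ℝ) ≤ 1 - t)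
              (by linarith : (0:ℝ) ≤ -(p i - ps i))]
          · nlinarith [mul_nonneg ht0.le hd.le]
        simp only [hr_def, Pi.smul_apply, Pi.sub_apply, smul_eq_mul, hwi]
        have hinv : 0 ≤ t⁻¹ := by positivity
        have h3 : t / n = t * (n:ℝ)⁻¹ := by ring
        nlinarith [h2]
      · simp only [hr_def, Pi.smul_apply, Pi.sub_apply, smul_eq_mul]
        rw [← Finset.mul_sum, Finset.sum_sub_distrib, ← Finset.mul_sum, hp.2, hwS.2]
        field_simp
        ring
    have hdecomp : w = (1 - t) • p + t • r := by
      funext i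
      simp only [hr_def, Pi.add_apply, Pi.smul_apply, Pi.sub_apply, smul_eq_mul]
      field_simp
      ring
    have hcc := hgconc.2 hp hrS (by linarith : (0:ℝ) ≤ 1 - t) ht0.le (by ring)
    rw [← hdecomp] at hcc
    simp only [smul_eq_mul] at hcc
    have hgw : g w = ψ0 w := hgO w hwO
    have := (hgmem r hrS).1
    nlinarith
  -- continuity of g on the closed simplex
  have hgcont : ContinuousOn g (closedSimplex n) := by
    intro ps hps
    rw [Metric.continuousWithinAt_iff]
    intro η hη
    set η' : ℝ := min η 1 with hη'_def
    have hη'0 : 0 < η' := lt_min hη one_pos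
    have hη'le : η' ≤ η := min_le_left _ _
    have hη'1 : η' ≤ 1 := min_le_right _ _
    -- choose a good stage k0 for the usc estimate
    have hbnd : 0 < min (1/2 : ℝ) (η' / (8 * (M + 1))) := lt_min (by norm_num) (by positivity)
    obtain ⟨m0, hm0⟩ := (Metric.tendsto_atTop.1 htkto) _ hbnd
    obtain ⟨k0, hk0ge, hk0lt⟩ := lif_exists_le (hvb ps hps)
      (show (0:ℝ) < η' / 4 by positivity) m0
    have htb : tk k0 < min (1/2 : ℝ) (η' / (8 * (M + 1))) := by
      have := hm0 k0 hk0ge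
      rwa [Real.dist_eq, sub_zero, abs_of_pos (htk0 k0)] at this
    have ht0 := htk0 k0
    have ht12 : tk k0 < 1/2 := lt_of_lt_of_le htb (min_le_left _ _)
    have htsm : tk k0 < η' / (8 * (M + 1)) := lt_of_lt_of_le htb (min_le_right _ _)
    -- choose δ for the lsc estimate
    set δ : ℝ := min (η' / (2 * (M + 1))) 1 with hδ_def
    have hδ0 : 0 < δ := lt_min (by positivity) one_pos
    have hδ1 : δ ≤ 1 := min_le_right _ _
    have hδsm : δ ≤ η' / (2 * (M + 1)) := min_le_left _ _
    -- the least positive coordinate of ps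
    have hTi : ∃ i, 0 < ps i := by
      by_contra hcon
      push_neg at hcon
      have : ∑ i, ps i ≤ 0 := Finset.sum_nonpos fun i _ => hcon i
      rw [hps.2] at this
      linarith
    set T : Finset (Fin n) := Finset.univ.filter (fun i => 0 < ps i) with hT_def
    have hTne : T.Nonempty := by
      obtain ⟨i, hi⟩ := hTi
      exact ⟨i, by simp [hT_def, hi]⟩
    set ρ : ℝ := T.inf' hTne ps with hρ_def
    have hρpos : 0 < ρ := by
      rw [hρ_def, Finset.lt_inf'_iff]
      intro i hi
      exact (Finset.mem_filter.1 hi).2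
    have hρle : ∀ i ∈ T, ρ ≤ ps i := fun i hi => Finset.inf'_le _ hi
    refine ⟨min (δ * ρ) (tk k0 / n), lt_min (by positivity) (by positivity), fun p hp hdist => ?_⟩
    have hdist1 : dist p ps < δ * ρ := lt_of_lt_of_le hdist (min_le_left _ _)
    have hdist2 : dist p ps < tk k0 / n := lt_of_lt_of_le hdist (min_le_right _ _)
    have hcoorddist : ∀ i, |p i - ps i| ≤ dist p ps := by
      intro i
      rw [← Real.dist_eq]
      exact dist_le_pi_dist p ps i
    -- upper estimate
    have hup : (1 - tk k0) * g p ≤ ψ0 (seg ps k0) := by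
      refine claim_usc ps hps k0 p hp fun i => ?_
      have := hcoorddist i
      have h1 := le_abs_self (p i - ps i)
      linarith
    have hgpM := hgmem p hp
    have hgpsM := hgmem ps hps
    have hvps : ψ0 (seg ps k0) < g ps + η' / 4 := hk0lt
    have htM : tk k0 * M ≤ η' / 8 := by
      have h1 : tk k0 * M ≤ η' / (8 * (M + 1)) * M :=
        mul_le_mul_of_nonneg_right htsm.le hM
      have h2 : η' / (8 * (M + 1)) * M ≤ η' / 8 := by
        rw [div_mul_eq_mul_div, div_le_div_iff₀ (by positivity) (by norm_num)]
        nlinarith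
      linarith
    have hupper : g p - g ps < η' / 2 := by
      have h1 : (1 - tk k0) * g p < g ps + η' / 4 := lt_of_le_of_lt hup hvps
      have h2 : tk k0 * g p ≤ tk k0 * M := mul_le_mul_of_nonneg_left hgpM.2 ht0.le
      nlinarith
    -- lower estimate
    have hcoords : ∀ i, (1 - δ) * ps i ≤ p i := by
      intro i
      by_cases hiT : 0 < ps i
      · have h1 : ρ ≤ ps i := hρle i (by simp [hT_def, hiT])
        have h2 := hcoorddist i
        have h3 : -(p i - ps i) ≤ |p i - ps i| := neg_le_abs _
        nlinarith
      · have h0 : ps i = 0 := le_antisymm (not_lt.1 hiT) (hps.1 i)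
        rw [h0]
        simpa using hp.1 i
    have hlow := claim_lsc ps hps δ hδ0 hδ1 p hp hcoords
    have hδM : δ * M ≤ η' / 2 := by
      have h1 : δ * M ≤ η' / (2 * (M + 1)) * M := mul_le_mul_of_nonneg_right hδsm hM
      have h2 : η' / (2 * (M + 1)) * M ≤ η' / 2 := by
        rw [div_mul_eq_mul_div, div_le_div_iff₀ (by positivity) (by norm_num)]
        nlinarith
      linarith
    have hlower : g ps - g p ≤ η' / 2 := by
      nlinarith [mul_le_mul_of_nonneg_left hgpsM.2 hδ0.le]
    rw [Real.dist_eq, abs_lt]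
    constructor <;> nlinarith
  refine ⟨g, hgcont, hgconc, hgmem, ?_⟩
  intro K hK hKO
  rcases K.eq_empty_or_nonempty with rfl | hKne
  · exact tendstoUniformlyOn_empty
  · obtain ⟨i0⟩ : Nonempty (Fin n) := ⟨⟨0, by omega⟩⟩
    have hKS : K ⊆ closedSimplex n := fun p hp => openBCF_subset (hKO hp)
    have hcoordmin : ∀ i : Fin n, ∃ e : ℝ, 0 < e ∧ ∀ p ∈ K, e ≤ p i := by
      intro i
      obtain ⟨p0, hp0K, hp0min⟩ := hK.exists_isMinOn hKne ((continuous_apply i).continuousOn)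
      exact ⟨p0 i, ((hKO hp0K).1 i).1, fun p hp => hp0min hp⟩
    choose e he1 he2 using hcoordmin
    set εK : ℝ := Finset.univ.inf' (Finset.univ_nonempty_iff.2 ⟨i0⟩) e with hεK_def
    have hεK0 : 0 < εK := by
      rw [hεK_def, Finset.lt_inf'_iff]
      exact fun i _ => he1 i
    have hεKle : ∀ p ∈ K, ∀ i, εK ≤ p i := fun p hp i =>
      le_trans (Finset.inf'_le _ (Finset.mem_univ i)) (he2 i p hp)
    set L : ℝ := M / εK with hL_def
    have hL0 : 0 ≤ L := by positivity
    rw [Metric.tendstoUniformlyOn_iff]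
    intro η hη
    set r : ℝ := η / (4 * (L + 1)) with hr_def
    have hr0 : 0 < r := by positivity
    have hLr : L * r ≤ η / 4 := by
      have h1 : L * r = L * η / (4 * (L + 1)) := by rw [hr_def]; ring
      rw [h1, div_le_div_iff₀ (by positivity) (by norm_num)]
      nlinarith [hL0, hη.le]
    have hcover : K ⊆ ⋃ q ∈ K, Metric.ball q r := fun p hp =>
      Set.mem_biUnion hp (Metric.mem_ball_self hr0)
    obtain ⟨b', hb'K, hb'fin, hb'cov⟩ :=
      hK.elim_finite_subcover_image (fun q _ => Metric.isOpen_ball) hcover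
    have hev : ∀ᶠ k in Filter.atTop, ∀ q ∈ b', dist (ψ (φ k) q) (ψ0 q) < η / 4 := by
      rw [Set.Finite.eventually_all hb'fin]
      intro q hq
      have hqO : q ∈ openSimplex n := hKO (hb'K hq)
      have := (Metric.tendsto_atTop.1 (hpt q hqO)) (η / 4) (by positivity)
      obtain ⟨N, hN⟩ := this
      filter_upwards [Filter.eventually_ge_atTop N] with k hk
      exact hN k hk
    filter_upwards [hev] with k hk
    intro p hp
    obtain ⟨q, hqb', hpq⟩ : ∃ q ∈ b', p ∈ Metric.ball q r := by
      have := hb'cov hp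
      simpa using this
    have hqK : q ∈ K := hb'K hqb'
    have hqS : q ∈ closedSimplex n := hKS hqK
    have hpS : p ∈ closedSimplex n := hKS hp
    have hpqdist : ‖p - q‖ < r := by rwa [← dist_eq_norm]
    have hqp : ‖q - p‖ < r := by rwa [norm_sub_rev]
    have hlip1 : |ψ0 p - ψ0 q| ≤ L * ‖p - q‖ :=
      hψ0lip2 hεK0 p hpS q hqS (hεKle p hp) (hεKle q hqK)
    have hlip2a : ψ (φ k) p - ψ (φ k) q ≤ L * ‖p - q‖ :=
      hψklip k hεK0 p hpS q hqS (hεKle q hqK)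
    have hlip2b : ψ (φ k) q - ψ (φ k) p ≤ L * ‖q - p‖ :=
      hψklip k hεK0 q hqS p hpS (hεKle p hp)
    have hq4 := hk q hqb'
    rw [Real.dist_eq] at hq4
    have hgp : g p = ψ0 p := hgO p (hKO hp)
    rw [Real.dist_eq, hgp]
    have habs := abs_sub_abs_le_abs_sub (ψ0 p) (ψ (φ k) p)
    rw [abs_sub_le_iff] at hlip1
    rw [abs_sub_lt_iff] at hq4
    have hLrpq : L * ‖p - q‖ ≤ η / 4 := by
      have := mul_le_mul_of_nonneg_left hpqdist.le hL0
      nlinarith [mul_le_mul_of_nonneg_left hpqdist.le hL0]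
    have hLrqp : L * ‖q - p‖ ≤ η / 4 := by
      nlinarith [mul_le_mul_of_nonneg_left hqp.le hL0]
    rw [abs_lt]
    constructor <;> nlinarith [hlip1.1, hlip1.2, hq4.1, hq4.2]
end

section
/- Fix λ > 0 and n ≥ 2. Let C = (C_1, …, C_n) be a random vector with values in (0, ∞)^n, and let X_1, X_2, … be i.i.d. copies of C. For K ≥ 1 define the random concave function Ψ_K(p) = m_λ(⟨p, X_1⟩, …, ⟨p, X_K⟩) for p ∈ Δ̄_n. Then almost surely Ψ_K converges, uniformly on every compact subset of Δ_n, to the deterministic function Ψ_∞(p) = −(1/λ) log 𝔼[e^{−λ ⟨p, C⟩}], which is a continuous concave function on Δ̄_n that is nonnegative and strictly positive on Δ_n. -/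
open MeasureTheory

/-- The softmin with parameter `lam`. -/
noncomputable def softmin (lam : ℝ) {K : ℕ} (x : Fin K → ℝ) : ℝ :=
  -(1 / lam) * Real.log ((1 / K) * ∑ k, Real.exp (-lam * x k))

/-- The deterministic limit `Ψ_∞(p) = −(1/λ) log 𝔼[e^{−λ⟨p,C⟩}]`. -/
noncomputable def PsiInf (lam : ℝ) (n : ℕ) {Ω : Type*} [MeasurableSpace Ω]
    (P : Measure Ω) (C : Ω → Fin n → ℝ) (p : Fin n → ℝ) : ℝ :=
  -(1 / lam) * Real.log (∫ ω, Real.exp (-lam * ∑ i, p i * C ω i) ∂P)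

lemma abs_exp_neg_sub_exp_neg (a b c : ℝ) (hca : c ≤ a) (hcb : c ≤ b) :
    |Real.exp (-a) - Real.exp (-b)| ≤ Real.exp (-c) * |a - b| := by
  wlog h : b ≤ a generalizing a b
  · rw [abs_sub_comm, abs_sub_comm a b]; exact this b a hcb hca (le_of_not_ge h)
  have h1 : Real.exp (-a) ≤ Real.exp (-b) := Real.exp_le_exp.2 (by linarith)
  rw [abs_of_nonpos (by linarith), abs_of_nonneg (by linarith)]
  have h2 : Real.exp (-a) = Real.exp (-b) * Real.exp (-(a - b)) := by
    rw [← Real.exp_add]; ring_nf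
  have h3 : 1 - Real.exp (-(a - b)) ≤ a - b := by
    have := Real.add_one_le_exp (-(a - b)); linarith
  have h4 : Real.exp (-b) - Real.exp (-a) ≤ Real.exp (-b) * (a - b) := by
    rw [h2]
    have := Real.exp_pos (-b)
    nlinarith
  have h5 : Real.exp (-b) ≤ Real.exp (-c) := Real.exp_le_exp.2 (by linarith)
  have h6 : (0:ℝ) ≤ a - b := by linarith
  nlinarith [Real.exp_pos (-b)]

lemma exp_inner_lipschitz {n : ℕ} (lam δ : ℝ) (hlam : 0 < lam) (hδ : 0 < δ)
    (p q x : Fin n → ℝ) (hp : ∀ i, δ ≤ p i) (hq : ∀ i, δ ≤ q i) (hx : ∀ i, 0 ≤ x i) :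
    |Real.exp (-lam * ∑ i, p i * x i) - Real.exp (-lam * ∑ i, q i * x i)|
      ≤ (1 / δ) * dist p q := by
  set s := ∑ i, x i with hs
  have hs0 : 0 ≤ s := Finset.sum_nonneg fun i _ => hx i
  have hpa : lam * (δ * s) ≤ lam * ∑ i, p i * x i := by
    apply mul_le_mul_of_nonneg_left _ hlam.le
    rw [Finset.mul_sum]
    exact Finset.sum_le_sum fun i _ => mul_le_mul_of_nonneg_right (hp i) (hx i)
  have hqa : lam * (δ * s) ≤ lam * ∑ i, q i * x i := by
    apply mul_le_mul_of_nonneg_left _ hlam.le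
    rw [Finset.mul_sum]
    exact Finset.sum_le_sum fun i _ => mul_le_mul_of_nonneg_right (hq i) (hx i)
  have key := abs_exp_neg_sub_exp_neg (lam * ∑ i, p i * x i) (lam * ∑ i, q i * x i)
    (lam * (δ * s)) hpa hqa
  have hdiff : |lam * ∑ i, p i * x i - lam * ∑ i, q i * x i| ≤ lam * (dist p q * s) := by
    rw [← mul_sub, abs_mul, abs_of_pos hlam, ← Finset.sum_sub_distrib]
    apply mul_le_mul_of_nonneg_left _ hlam.le
    calc |∑ i, (p i * x i - q i * x i)| ≤ ∑ i, |p i * x i - q i * x i| :=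
          Finset.abs_sum_le_sum_abs _ _
      _ ≤ ∑ i, dist p q * x i := by
          apply Finset.sum_le_sum
          intro i _
          rw [← sub_mul, abs_mul, abs_of_nonneg (hx i)]
          exact mul_le_mul_of_nonneg_right
            (by rw [← Real.dist_eq]; exact dist_le_pi_dist p q i) (hx i)
      _ = dist p q * s := by rw [← Finset.mul_sum]
  have hub : Real.exp (-(lam * (δ * s))) * (lam * s) ≤ 1 / δ := by
    have h1 : lam * δ * s ≤ Real.exp (lam * δ * s) := by
      have := Real.add_one_le_exp (lam * δ * s); linarith
    have h2 : Real.exp (-(lam * (δ * s))) * Real.exp (lam * (δ * s)) = 1 := by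
      rw [← Real.exp_add]; simp
    have h3 := Real.exp_pos (-(lam * (δ * s)))
    rw [le_div_iff₀ hδ]
    calc Real.exp (-(lam * (δ * s))) * (lam * s) * δ
        = Real.exp (-(lam * (δ * s))) * (lam * δ * s) := by ring
      _ ≤ Real.exp (-(lam * (δ * s))) * Real.exp (lam * δ * s) :=
          mul_le_mul_of_nonneg_left h1 h3.le
      _ = 1 := by rw [show lam * δ * s = lam * (δ * s) by ring]; exact h2
  have hd0 : 0 ≤ dist p q := dist_nonneg
  calc |Real.exp (-lam * ∑ i, p i * x i) - Real.exp (-lam * ∑ i, q i * x i)|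
      = |Real.exp (-(lam * ∑ i, p i * x i)) - Real.exp (-(lam * ∑ i, q i * x i))| := by
        ring_nf
    _ ≤ Real.exp (-(lam * (δ * s))) * |lam * ∑ i, p i * x i - lam * ∑ i, q i * x i| :=
        key
    _ ≤ Real.exp (-(lam * (δ * s))) * (lam * (dist p q * s)) :=
        mul_le_mul_of_nonneg_left hdiff (Real.exp_pos _).le
    _ = Real.exp (-(lam * (δ * s))) * (lam * s) * dist p q := by ring
    _ ≤ (1 / δ) * dist p q := mul_le_mul_of_nonneg_right hub hd0

lemma abs_log_sub_log_le (x y c : ℝ) (hc : 0 < c) (hx : c ≤ x) (hy : c ≤ y) :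
    |Real.log x - Real.log y| ≤ |x - y| / c := by
  wlog h : y ≤ x generalizing x y
  · rw [abs_sub_comm, abs_sub_comm x y]; exact this y x hy hx (le_of_not_ge h)
  have hx0 : 0 < x := lt_of_lt_of_le hc hx
  have hy0 : 0 < y := lt_of_lt_of_le hc hy
  have h1 : Real.log x - Real.log y = Real.log (x / y) := (Real.log_div hx0.ne' hy0.ne').symm
  have h2 : Real.log (x / y) ≤ x / y - 1 := Real.log_le_sub_one_of_pos (by positivity)
  have h3 : 0 ≤ Real.log x - Real.log y := by
    have := Real.log_le_log hy0 h; linarith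
  rw [abs_of_nonneg h3, abs_of_nonneg (by linarith), h1]
  calc Real.log (x / y) ≤ x / y - 1 := h2
    _ = (x - y) / y := by field_simp
    _ ≤ (x - y) / c := div_le_div_of_nonneg_left (by linarith) hc hy

/-- with `λ > 0` fixed and `X_1, X_2, …` i.i.d. copies of a random vector
`C` with values in `(0,∞)^n`, the random concave functions
`Ψ_K(p) = m_λ(⟨p,X_1⟩, …, ⟨p,X_K⟩)` converge almost surely, uniformly on every compact
subset of `Δ_n`, to the deterministic function `Ψ_∞(p) = −(1/λ) log 𝔼[e^{−λ⟨p,C⟩}]`,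
which is continuous and concave on `Δ̄_n`, nonnegative there, and strictly positive
on `Δ_n`. -/
theorem softmin_hyperplanes_det_limit (lam : ℝ) (hlam : 0 < lam) (n : ℕ) (hn : 2 ≤ n)
    {Ω : Type*} [MeasurableSpace Ω] (P : Measure Ω) [IsProbabilityMeasure P]
    (C : Ω → Fin n → ℝ) (hCmeas : Measurable C) (hCpos : ∀ ω i, 0 < C ω i)
    (X : ℕ → Ω → Fin n → ℝ) (hXmeas : ∀ k, Measurable (X k))
    (hindep : ProbabilityTheory.iIndepFun X P)
    (hlaw : ∀ k, Measure.map (X k) P = Measure.map C P) :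
    (ContinuousOn (PsiInf lam n P C) (closedSimplex n) ∧
      ConcaveOn ℝ (closedSimplex n) (PsiInf lam n P C) ∧
      (∀ p ∈ closedSimplex n, 0 ≤ PsiInf lam n P C p) ∧
      (∀ p ∈ openSimplex n, 0 < PsiInf lam n P C p)) ∧
    ∀ᵐ ω ∂P, ∀ S : Set (Fin n → ℝ), IsCompact S → S ⊆ openSimplex n →
      TendstoUniformlyOn
        (fun (K : ℕ) (p : Fin n → ℝ) =>
          softmin lam (fun k : Fin K => ∑ i, p i * X k ω i))
        (PsiInf lam n P C) Filter.atTop S := by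
  classical
  have hnpos : 0 < n := by omega
  have : Nonempty (Fin n) := ⟨⟨0, hnpos⟩⟩
  -- the inner exponential and its mean
  set f : (Fin n → ℝ) → Ω → ℝ := fun p ω => Real.exp (-lam * ∑ i, p i * C ω i) with hfdef
  set G : (Fin n → ℝ) → ℝ := fun p => ∫ ω, f p ω ∂P with hGdef
  have hPsiEq : ∀ p, PsiInf lam n P C p = -(1 / lam) * Real.log (G p) := fun p => rfl
  -- measurability
  have hfmeas : ∀ p, Measurable (f p) := by
    intro p
    apply Measurable.exp
    apply Measurable.const_mul
    exact Finset.measurable_sum _ fun i _ =>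
      (measurable_const.mul ((measurable_pi_apply i).comp hCmeas))
  have hfpos : ∀ p ω, 0 < f p ω := fun p ω => Real.exp_pos _
  have hfle1 : ∀ p, (∀ i, 0 ≤ p i) → ∀ ω, f p ω ≤ 1 := by
    intro p hp ω
    apply Real.exp_le_one_iff.2
    have : 0 ≤ ∑ i, p i * C ω i :=
      Finset.sum_nonneg fun i _ => mul_nonneg (hp i) (hCpos ω i).le
    nlinarith
  have hfint : ∀ p, (∀ i, 0 ≤ p i) → Integrable (f p) P := by
    intro p hp
    refine (memLp_top_of_bound (hfmeas p).aestronglyMeasurable 1 ?_).integrable le_top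
    exact ae_of_all _ fun ω => by
      rw [Real.norm_eq_abs, abs_of_pos (hfpos p ω)]; exact hfle1 p hp ω
  have hGpos : ∀ p, (∀ i, 0 ≤ p i) → 0 < G p := by
    intro p hp
    rw [hGdef]
    refine (integral_pos_iff_support_of_nonneg_ae
      (ae_of_all _ fun ω => (hfpos p ω).le) (hfint p hp)).2 ?_
    have : Function.support (f p) = Set.univ := Set.eq_univ_of_forall fun ω => (hfpos p ω).ne'
    rw [this]
    simp
  have hGle1 : ∀ p, (∀ i, 0 ≤ p i) → G p ≤ 1 := by
    intro p hp
    have : G p ≤ ∫ _, (1:ℝ) ∂P :=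
      integral_mono (hfint p hp) (integrable_const 1) (fun ω => hfle1 p hp ω)
    simpa using this
  have hGlt1 : ∀ p ∈ openSimplex n, G p < 1 := by
    intro p hp
    have hp0 : ∀ i, 0 ≤ p i := fun i => (hp.1 i).1.le
    have hint1 : Integrable (fun ω => (1:ℝ) - f p ω) P := (integrable_const 1).sub (hfint p hp0)
    have hlt : ∀ ω, f p ω < 1 := by
      intro ω
      have hsum : 0 < ∑ i, p i * C ω i :=
        Finset.sum_pos (fun i _ => mul_pos (hp.1 i).1 (hCpos ω i)) Finset.univ_nonempty
      have : -lam * ∑ i, p i * C ω i < 0 := by nlinarith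
      calc f p ω < Real.exp 0 := Real.exp_lt_exp.2 this
        _ = 1 := Real.exp_zero
    have hpos : 0 < ∫ ω, ((1:ℝ) - f p ω) ∂P := by
      refine (integral_pos_iff_support_of_nonneg_ae
        (ae_of_all _ fun ω => by show (0:ℝ) ≤ 1 - f p ω; linarith [hlt ω]) hint1).2 ?_
      have : Function.support (fun ω => (1:ℝ) - f p ω) = Set.univ :=
        Set.eq_univ_of_forall fun ω => sub_ne_zero.2 (hlt ω).ne'
      rw [this]; simp
    rw [integral_sub (integrable_const 1) (hfint p hp0)] at hpos
    simp only [integral_const, measure_univ, ENNReal.toReal_one, probReal_univ, smul_eq_mul, one_mul] at hpos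
    rw [hGdef]; linarith
  have hGlip : ∀ δ, 0 < δ → ∀ p q : Fin n → ℝ, (∀ i, δ ≤ p i) → (∀ i, δ ≤ q i) →
      |G p - G q| ≤ (1 / δ) * dist p q := by
    intro δ hδ p q hp hq
    have hp0 : ∀ i, 0 ≤ p i := fun i => le_trans hδ.le (hp i)
    have hq0 : ∀ i, 0 ≤ q i := fun i => le_trans hδ.le (hq i)
    have hsub : G p - G q = ∫ ω, (f p ω - f q ω) ∂P :=
      (integral_sub (hfint p hp0) (hfint q hq0)).symm
    rw [hsub]
    calc |∫ ω, (f p ω - f q ω) ∂P| ≤ ∫ ω, |f p ω - f q ω| ∂P := by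
          simpa [Real.norm_eq_abs] using
            norm_integral_le_integral_norm (μ := P) (fun ω => f p ω - f q ω)
      _ ≤ ∫ _ω, (1 / δ) * dist p q ∂P := by
          refine integral_mono (((hfint p hp0).sub (hfint q hq0)).abs) (integrable_const _) ?_
          intro ω
          exact exp_inner_lipschitz lam δ hlam hδ p q (C ω) hp hq (fun i => (hCpos ω i).le)
      _ = (1 / δ) * dist p q := by simp
  have hGcont : ContinuousOn G (closedSimplex n) := by
    intro p₀ _hp₀
    apply continuousWithinAt_of_dominated (bound := fun _ => (1:ℝ))
    · exact Filter.Eventually.of_forall fun p => (hfmeas p).aestronglyMeasurable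
    · filter_upwards [self_mem_nhdsWithin] with p hp
      exact ae_of_all _ fun ω => by
        rw [Real.norm_eq_abs, abs_of_pos (hfpos p ω)]; exact hfle1 p hp.1 ω
    · exact integrable_const 1
    · refine ae_of_all _ fun ω => Continuous.continuousWithinAt ?_
      have : Continuous fun p : Fin n → ℝ => ∑ i, p i * C ω i :=
        continuous_finset_sum _ fun i _ => (continuous_apply i).mul continuous_const
      exact Real.continuous_exp.comp (continuous_const.mul this)
  -- deterministic part
  have hPsiCont : ContinuousOn (PsiInf lam n P C) (closedSimplex n) := by
    have : ContinuousOn (fun p => -(1 / lam) * Real.log (G p)) (closedSimplex n) :=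
      continuousOn_const.mul (hGcont.log fun p hp => (hGpos p hp.1).ne')
    exact this
  have hConvex : Convex ℝ (closedSimplex n) := by
    intro p hp q hq a b ha hb hab
    constructor
    · intro i
      have : (a • p + b • q) i = a * p i + b * q i := by
        simp [Pi.add_apply, Pi.smul_apply, smul_eq_mul]
      rw [this]
      have := hp.1 i; have := hq.1 i
      nlinarith
    · have : ∀ i, (a • p + b • q) i = a * p i + b * q i := fun i => by
        simp [Pi.add_apply, Pi.smul_apply, smul_eq_mul]
      rw [Finset.sum_congr rfl fun i _ => this i]
      rw [Finset.sum_add_distrib, ← Finset.mul_sum, ← Finset.mul_sum, hp.2, hq.2]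
      linarith
  have hHolder : ∀ p ∈ closedSimplex n, ∀ q ∈ closedSimplex n, ∀ a b : ℝ,
      0 < a → 0 < b → a + b = 1 → G (a • p + b • q) ≤ G p ^ a * G q ^ b := by
    intro p hp q hq a b ha hb hab
    have ha1 : a < 1 := by linarith
    have hpq : (1/a).HolderConjugate (1/b) := by
      simpa using Real.HolderConjugate.inv_inv ha hb hab
    set F1 : Ω → ℝ := fun ω => f p ω ^ a with hF1
    set F2 : Ω → ℝ := fun ω => f q ω ^ b with hF2
    have hm1 : Measurable F1 :=
      (Real.continuous_rpow_const ha.le).measurable.comp (hfmeas p)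
    have hm2 : Measurable F2 :=
      (Real.continuous_rpow_const hb.le).measurable.comp (hfmeas q)
    have hb1 : ∀ ω, F1 ω ≤ 1 := fun ω =>
      Real.rpow_le_one (hfpos p ω).le (hfle1 p hp.1 ω) ha.le
    have hb2 : ∀ ω, F2 ω ≤ 1 := fun ω =>
      Real.rpow_le_one (hfpos q ω).le (hfle1 q hq.1 ω) hb.le
    have hnn1 : ∀ ω, 0 ≤ F1 ω := fun ω => Real.rpow_nonneg (hfpos p ω).le a
    have hnn2 : ∀ ω, 0 ≤ F2 ω := fun ω => Real.rpow_nonneg (hfpos q ω).le b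
    have hmem1 : MemLp F1 (ENNReal.ofReal (1/a)) P := by
      refine (memLp_top_of_bound hm1.aestronglyMeasurable 1 ?_).mono_exponent le_top
      exact ae_of_all _ fun ω => by rw [Real.norm_eq_abs, abs_of_nonneg (hnn1 ω)]; exact hb1 ω
    have hmem2 : MemLp F2 (ENNReal.ofReal (1/b)) P := by
      refine (memLp_top_of_bound hm2.aestronglyMeasurable 1 ?_).mono_exponent le_top
      exact ae_of_all _ fun ω => by rw [Real.norm_eq_abs, abs_of_nonneg (hnn2 ω)]; exact hb2 ω
    have key := integral_mul_le_Lp_mul_Lq_of_nonneg (μ := P) hpq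
      (ae_of_all _ hnn1) (ae_of_all _ hnn2) hmem1 hmem2
    have e1 : ∀ ω, F1 ω ^ (1/a) = f p ω := by
      intro ω
      rw [hF1]
      dsimp only
      rw [← Real.rpow_mul (hfpos p ω).le, mul_one_div_cancel ha.ne', Real.rpow_one]
    have e2 : ∀ ω, F2 ω ^ (1/b) = f q ω := by
      intro ω
      rw [hF2]
      dsimp only
      rw [← Real.rpow_mul (hfpos q ω).le, mul_one_div_cancel hb.ne', Real.rpow_one]
    have esum : ∀ ω, ∑ i, (a • p + b • q) i * C ω i
        = a * ∑ i, p i * C ω i + b * ∑ i, q i * C ω i := by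
      intro ω
      rw [Finset.mul_sum, Finset.mul_sum, ← Finset.sum_add_distrib]
      refine Finset.sum_congr rfl fun i _ => ?_
      simp only [Pi.add_apply, Pi.smul_apply, smul_eq_mul]
      ring
    have e3 : ∀ ω, F1 ω * F2 ω = f (a • p + b • q) ω := by
      intro ω
      rw [hF1, hF2]
      dsimp only
      simp only [hfdef]
      rw [← Real.exp_mul, ← Real.exp_mul, ← Real.exp_add, esum ω]
      congr 1
      ring
    have eint1 : ∫ ω, F1 ω ^ (1/a) ∂P = G p := by
      simp only [hGdef]
      exact integral_congr_ae (ae_of_all _ e1)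
    have eint2 : ∫ ω, F2 ω ^ (1/b) ∂P = G q := by
      simp only [hGdef]
      exact integral_congr_ae (ae_of_all _ e2)
    calc G (a • p + b • q) = ∫ ω, F1 ω * F2 ω ∂P := by
          simp only [hGdef]
          exact integral_congr_ae (ae_of_all _ fun ω => (e3 ω).symm)
      _ ≤ (∫ ω, F1 ω ^ (1/a) ∂P) ^ (1/(1/a)) * (∫ ω, F2 ω ^ (1/b) ∂P) ^ (1/(1/b)) := key
      _ = G p ^ a * G q ^ b := by rw [eint1, eint2, one_div_one_div, one_div_one_div]
  have hPsiConc : ConcaveOn ℝ (closedSimplex n) (PsiInf lam n P C) := by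
    refine ⟨hConvex, ?_⟩
    intro p hp q hq a b ha hb hab
    obtain rfl | ha' := ha.eq_or_lt
    · have hb1 : b = 1 := by linarith
      subst hb1; simp
    obtain rfl | hb' := hb.eq_or_lt
    · have ha1 : a = 1 := by linarith
      subst ha1; simp
    have hcombo : a • p + b • q ∈ closedSimplex n := hConvex hp hq ha hb hab
    have key := hHolder p hp q hq a b ha' hb' hab
    have hGp := hGpos p hp.1
    have hGq := hGpos q hq.1
    have hGc := hGpos _ hcombo.1
    have hlog : Real.log (G (a • p + b • q)) ≤ a * Real.log (G p) + b * Real.log (G q) := by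
      calc Real.log (G (a • p + b • q)) ≤ Real.log (G p ^ a * G q ^ b) :=
            Real.log_le_log hGc key
        _ = a * Real.log (G p) + b * Real.log (G q) := by
            rw [Real.log_mul (Real.rpow_pos_of_pos hGp a).ne' (Real.rpow_pos_of_pos hGq b).ne',
              Real.log_rpow hGp, Real.log_rpow hGq]
    simp only [smul_eq_mul, hPsiEq]
    have h1 : 0 < 1/lam := one_div_pos.mpr hlam
    nlinarith [mul_le_mul_of_nonneg_left hlog h1.le]
  have hPsiNonneg : ∀ p ∈ closedSimplex n, 0 ≤ PsiInf lam n P C p := by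
    intro p hp
    rw [hPsiEq]
    have h1 : Real.log (G p) ≤ 0 := Real.log_nonpos (hGpos p hp.1).le (hGle1 p hp.1)
    nlinarith [one_div_pos.mpr hlam]
  have hPsiPos : ∀ p ∈ openSimplex n, 0 < PsiInf lam n P C p := by
    intro p hp
    rw [hPsiEq]
    have hp0 : ∀ i, 0 ≤ p i := fun i => (hp.1 i).1.le
    have h1 : Real.log (G p) < 0 := Real.log_neg (hGpos p hp0) (hGlt1 p hp)
    nlinarith [one_div_pos.mpr hlam]
  refine ⟨⟨hPsiCont, hPsiConc, hPsiNonneg, hPsiPos⟩, ?_⟩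
  have h2δfact : ∀ δ : ℝ, 0 < δ → (1:ℝ)/(δ/2) = 2/δ := fun δ hδ => one_div_div δ 2
  -- a.e. all coordinates of all X k are positive
  set pos : Set (Fin n → ℝ) := {x | ∀ i, 0 < x i} with hposdef
  have hposmeas : MeasurableSet pos := by
    have : pos = ⋂ i, (fun x : Fin n → ℝ => x i) ⁻¹' Set.Ioi 0 := by
      ext x; simp [hposdef, Set.mem_iInter]
    rw [this]
    exact MeasurableSet.iInter fun i => (measurable_pi_apply i) measurableSet_Ioi
  have hXpos : ∀ k, ∀ᵐ ω ∂P, ∀ i, 0 < X k ω i := by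
    intro k
    rw [MeasureTheory.ae_iff]
    have h0 : {ω | ¬ ∀ i, 0 < X k ω i} = (X k) ⁻¹' posᶜ := by
      ext ω; simp [hposdef]
    rw [h0, ← Measure.map_apply (hXmeas k) hposmeas.compl, hlaw k,
      Measure.map_apply hCmeas hposmeas.compl]
    have : C ⁻¹' posᶜ = ∅ :=
      Set.eq_empty_iff_forall_notMem.2 fun ω hω => hω (fun i => hCpos ω i)
    rw [this]; simp
  -- countable dense set
  obtain ⟨D, hDcount, hDdense⟩ := TopologicalSpace.exists_countable_dense (Fin n → ℝ)
  -- strong law of large numbers at each nonnegative point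
  have hSLLN : ∀ d : Fin n → ℝ, (∀ i, (0:ℝ) ≤ d i) → ∀ᵐ ω ∂P,
      Filter.Tendsto
        (fun K : ℕ => (∑ k ∈ Finset.range K, Real.exp (-lam * ∑ i, d i * X k ω i)) / K)
        Filter.atTop (nhds (G d)) := by
    intro d hd
    set φ : (Fin n → ℝ) → ℝ := fun x => Real.exp (-lam * ∑ i, d i * x i) with hφdef
    have hφmeas : Measurable φ := by
      apply Measurable.exp
      apply Measurable.const_mul
      exact Finset.measurable_sum _ fun i _ => (measurable_pi_apply i).const_mul _
    set Y : ℕ → Ω → ℝ := fun k ω => φ (X k ω) with hYdef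
    have hYmeas : ∀ k, Measurable (Y k) := fun k => hφmeas.comp (hXmeas k)
    have hYint : Integrable (Y 0) P := by
      refine (memLp_top_of_bound (hYmeas 0).aestronglyMeasurable 1 ?_).integrable le_top
      filter_upwards [hXpos 0] with ω hω
      rw [Real.norm_eq_abs, abs_of_pos (Real.exp_pos _)]
      apply Real.exp_le_one_iff.2
      have : 0 ≤ ∑ i, d i * X 0 ω i :=
        Finset.sum_nonneg fun i _ => mul_nonneg (hd i) (hω i).le
      nlinarith
    have hYindep : Pairwise (Function.onFun (ProbabilityTheory.IndepFun · · P) Y) := by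
      intro k j hkj
      exact (hindep.indepFun hkj).comp hφmeas hφmeas
    have hXident : ∀ k, ProbabilityTheory.IdentDistrib (X k) (X 0) P P := fun k =>
      ⟨(hXmeas k).aemeasurable, (hXmeas 0).aemeasurable, by rw [hlaw k, hlaw 0]⟩
    have hYident : ∀ k, ProbabilityTheory.IdentDistrib (Y k) (Y 0) P P := fun k =>
      (hXident k).comp hφmeas
    have hEY : ∫ ω, Y 0 ω ∂P = G d := by
      have h1 : ∫ ω, Y 0 ω ∂P = ∫ x, φ x ∂(Measure.map (X 0) P) :=
        (integral_map (hXmeas 0).aemeasurable hφmeas.aestronglyMeasurable).symm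
      rw [h1, hlaw 0, integral_map hCmeas.aemeasurable hφmeas.aestronglyMeasurable]
    have hsl := ProbabilityTheory.strong_law_ae_real Y hYint hYindep hYident
    rw [hEY] at hsl
    exact hsl
  -- almost sure event
  have hAE : ∀ᵐ ω ∂P, (∀ k, ∀ i, 0 < X k ω i) ∧
      ∀ d ∈ D, (∀ i, (0:ℝ) ≤ d i) → Filter.Tendsto
        (fun K : ℕ => (∑ k ∈ Finset.range K, Real.exp (-lam * ∑ i, d i * X k ω i)) / K)
        Filter.atTop (nhds (G d)) := by
    refine Filter.Eventually.and ?_ ?_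
    · rw [MeasureTheory.ae_all_iff]; exact hXpos
    · rw [MeasureTheory.ae_ball_iff hDcount]
      intro d _hd
      by_cases h : ∀ i, (0:ℝ) ≤ d i
      · filter_upwards [hSLLN d h] with ω hω _
        exact hω
      · exact ae_of_all _ fun ω h' => absurd h' h
  filter_upwards [hAE] with ω hω
  obtain ⟨hωpos, hωconv⟩ := hω
  intro S hScomp hSsub
  rcases S.eq_empty_or_nonempty with rfl | hSne
  · exact tendstoUniformlyOn_empty
  -- uniform positive lower bound on coordinates
  have hδex : ∃ δ : ℝ, 0 < δ ∧ ∀ p ∈ S, ∀ i, δ ≤ p i := by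
    have hmins : ∀ i : Fin n, ∃ m : ℝ, 0 < m ∧ ∀ p ∈ S, m ≤ p i := by
      intro i
      obtain ⟨p₀, hp₀S, hmin⟩ := hScomp.exists_isMinOn hSne (continuous_apply i).continuousOn
      exact ⟨p₀ i, ((hSsub hp₀S).1 i).1, fun p hp => hmin hp⟩
    choose m hm1 hm2 using hmins
    refine ⟨Finset.univ.inf' Finset.univ_nonempty m, ?_, ?_⟩
    · rw [Finset.lt_inf'_iff]; exact fun i _ => hm1 i
    · intro p hp i
      exact le_trans (Finset.inf'_le m (Finset.mem_univ i)) (hm2 i p hp)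
  obtain ⟨δ, hδ, hδS⟩ := hδex
  have h2δ : (1:ℝ)/(δ/2) = 2/δ := h2δfact δ hδ
  -- lower bound of G on S
  have hSclosed : S ⊆ closedSimplex n := fun p hp =>
    ⟨fun i => ((hSsub hp).1 i).1.le, (hSsub hp).2⟩
  obtain ⟨pc, hpcS, hpcmin⟩ := hScomp.exists_isMinOn hSne (hGcont.mono hSclosed)
  set c := G pc with hcdef
  have hc : 0 < c := hGpos pc (fun i => ((hSsub hpcS).1 i).1.le)
  have hcS : ∀ p ∈ S, c ≤ G p := fun p hp => hpcmin hp
  -- the empirical averages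
  set A : ℕ → (Fin n → ℝ) → ℝ := fun K p =>
    (∑ k ∈ Finset.range K, Real.exp (-lam * ∑ i, p i * X k ω i)) / K with hAdef
  -- Lipschitz estimate for the averages
  have hAlip : ∀ K : ℕ, ∀ p q : Fin n → ℝ, (∀ i, δ/2 ≤ p i) → (∀ i, δ/2 ≤ q i) →
      |A K p - A K q| ≤ (2/δ) * dist p q := by
    intro K p q hp hq
    rcases Nat.eq_zero_or_pos K with rfl | hK
    · simp [hAdef]
      positivity
    have hKpos : (0:ℝ) < K := by exact_mod_cast hK
    have hsum : |∑ k ∈ Finset.range K, (Real.exp (-lam * ∑ i, p i * X k ω i)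
        - Real.exp (-lam * ∑ i, q i * X k ω i))| ≤ K * ((2/δ) * dist p q) := by
      calc |∑ k ∈ Finset.range K, (Real.exp (-lam * ∑ i, p i * X k ω i)
            - Real.exp (-lam * ∑ i, q i * X k ω i))|
          ≤ ∑ k ∈ Finset.range K, |Real.exp (-lam * ∑ i, p i * X k ω i)
            - Real.exp (-lam * ∑ i, q i * X k ω i)| := Finset.abs_sum_le_sum_abs _ _
        _ ≤ ∑ _k ∈ Finset.range K, (2/δ) * dist p q := by
            refine Finset.sum_le_sum fun k _ => ?_
            have := exp_inner_lipschitz lam (δ/2) hlam (by positivity) p q (X k ω)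
              hp hq (fun i => (hωpos k i).le)
            rwa [h2δ] at this
        _ = K * ((2/δ) * dist p q) := by
            rw [Finset.sum_const, Finset.card_range, nsmul_eq_mul]
    have heq : A K p - A K q = (∑ k ∈ Finset.range K, (Real.exp (-lam * ∑ i, p i * X k ω i)
        - Real.exp (-lam * ∑ i, q i * X k ω i))) / K := by
      rw [hAdef]
      dsimp only
      rw [Finset.sum_sub_distrib]
      ring
    rw [heq, abs_div, Nat.abs_cast]
    rw [div_le_iff₀ hKpos]
    calc |∑ k ∈ Finset.range K, (Real.exp (-lam * ∑ i, p i * X k ω i)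
          - Real.exp (-lam * ∑ i, q i * X k ω i))| ≤ K * ((2/δ) * dist p q) := hsum
      _ = 2 / δ * dist p q * K := by ring
  -- uniform convergence of the averages on S
  have hAunif : TendstoUniformlyOn A G Filter.atTop S := by
    rw [Metric.tendstoUniformlyOn_iff]
    intro ε hε
    set r : ℝ := min (δ/2) (ε * δ / 16) with hrdef
    have hr : 0 < r := lt_min (by positivity) (by positivity)
    have hcov : S ⊆ ⋃ d : D, Metric.ball (d : Fin n → ℝ) r := by
      intro p hp
      obtain ⟨y, hy⟩ := Metric.dense_iff.1 hDdense p r hr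
      refine Set.mem_iUnion.2 ⟨⟨y, hy.2⟩, ?_⟩
      have : dist y p < r := hy.1
      simpa [Metric.mem_ball, dist_comm] using this
    obtain ⟨t, ht⟩ := hScomp.elim_finite_subcover (fun d : D => Metric.ball (d : Fin n → ℝ) r)
      (fun _ => Metric.isOpen_ball) hcov
    set t' := t.filter (fun d : D => (Metric.ball (d : Fin n → ℝ) r ∩ S).Nonempty) with ht'def
    have hd'prop : ∀ d ∈ t', (∀ i, δ/2 ≤ (d : Fin n → ℝ) i) := by
      intro d hd
      rw [ht'def, Finset.mem_filter] at hd
      obtain ⟨p, hpball, hpS⟩ := hd.2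
      intro i
      have h1 : δ ≤ p i := hδS p hpS i
      have h2 : dist p (d : Fin n → ℝ) < r := hpball
      have h3 : |(d : Fin n → ℝ) i - p i| ≤ dist (d : Fin n → ℝ) p := by
        rw [← Real.dist_eq]; exact dist_le_pi_dist _ _ i
      have h4 : r ≤ δ/2 := min_le_left _ _
      have h5 := (abs_le.1 h3).1
      rw [dist_comm] at h2
      linarith
    have hconv' : ∀ d ∈ t', Filter.Tendsto (fun K => A K (d : Fin n → ℝ))
        Filter.atTop (nhds (G (d : Fin n → ℝ))) := by
      intro d hd
      exact hωconv (d : Fin n → ℝ) d.2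
        (fun i => le_trans (by positivity) (hd'prop d hd i))
    have hev : ∀ᶠ K in Filter.atTop, ∀ d ∈ t',
        dist (A K (d : Fin n → ℝ)) (G (d : Fin n → ℝ)) < ε/4 := by
      rw [Filter.eventually_all_finset]
      intro d hd
      exact Metric.tendsto_nhds.1 (hconv' d hd) (ε/4) (by positivity)
    filter_upwards [hev] with K hK
    intro p hpS
    obtain ⟨d, hdt, hpball⟩ := Set.mem_iUnion₂.1 (ht hpS)
    have hdt' : d ∈ t' := by
      rw [ht'def, Finset.mem_filter]
      exact ⟨hdt, ⟨p, hpball, hpS⟩⟩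
    have hdco : ∀ i, δ/2 ≤ (d : Fin n → ℝ) i := hd'prop d hdt'
    have hpco : ∀ i, δ/2 ≤ p i := fun i => le_trans (by linarith) (hδS p hpS i)
    have hdistpd : dist p (d : Fin n → ℝ) < r := hpball
    have hG1 : |G p - G (d : Fin n → ℝ)| ≤ (2/δ) * dist p (d : Fin n → ℝ) := by
      have := hGlip (δ/2) (by positivity) p (d : Fin n → ℝ) hpco hdco
      rwa [h2δ] at this
    have hA1 : |A K (d : Fin n → ℝ) - A K p| ≤ (2/δ) * dist p (d : Fin n → ℝ) := by
      have := hAlip K (d : Fin n → ℝ) p hdco hpco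
      rwa [dist_comm] at this
    have hmid : |A K (d : Fin n → ℝ) - G (d : Fin n → ℝ)| < ε/4 := by
      have := hK d hdt'
      rwa [Real.dist_eq] at this
    have hrbound : (2/δ) * dist p (d : Fin n → ℝ) ≤ ε/8 := by
      have h1 : dist p (d : Fin n → ℝ) ≤ ε * δ / 16 :=
        le_trans hdistpd.le (min_le_right _ _)
      calc (2/δ) * dist p (d : Fin n → ℝ) ≤ (2/δ) * (ε * δ / 16) := by
            apply mul_le_mul_of_nonneg_left h1 (by positivity)
        _ = ε/8 := by field_simp; ring
    rw [Real.dist_eq]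
    have htri : |G p - A K p| ≤ |G p - G (d : Fin n → ℝ)|
        + |G (d : Fin n → ℝ) - A K (d : Fin n → ℝ)|
        + |A K (d : Fin n → ℝ) - A K p| := by
      have : G p - A K p = (G p - G (d : Fin n → ℝ))
          + (G (d : Fin n → ℝ) - A K (d : Fin n → ℝ))
          + (A K (d : Fin n → ℝ) - A K p) := by ring
      rw [this]
      exact abs_add_three _ _ _
    have hmid' : |G (d : Fin n → ℝ) - A K (d : Fin n → ℝ)| < ε/4 := by
      rwa [abs_sub_comm] at hmid
    linarith
  -- compose with the logarithm
  rw [Metric.tendstoUniformlyOn_iff]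
  intro ε hε
  set ε₁ := min (c/2) (lam * c * ε / 8) with hε₁def
  have hε₁ : 0 < ε₁ := lt_min (by positivity) (by positivity)
  have h1 := Metric.tendstoUniformlyOn_iff.1 hAunif ε₁ hε₁
  filter_upwards [h1] with K hK p hpS
  have hGa : |G p - A K p| < ε₁ := by
    have := hK p hpS
    rwa [Real.dist_eq] at this
  have hGge : c ≤ G p := hcS p hpS
  have hε₁le : ε₁ ≤ c/2 := min_le_left _ _
  have hAc : c/2 ≤ A K p := by
    have := abs_lt.1 hGa
    linarith [this.2]
  have hGc2 : c/2 ≤ G p := by linarith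
  have hsm : softmin lam (fun k : Fin K => ∑ i, p i * X (k : ℕ) ω i)
      = -(1/lam) * Real.log (A K p) := by
    have hAe : A K p = (1/(K:ℝ)) * ∑ k : Fin K, Real.exp (-lam * ∑ i, p i * X (k:ℕ) ω i) := by
      rw [hAdef]
      dsimp only
      rw [Fin.sum_univ_eq_sum_range (fun k => Real.exp (-lam * ∑ i, p i * X k ω i)) K]
      rw [one_div, inv_mul_eq_div]
    unfold softmin
    rw [hAe]
  rw [Real.dist_eq, hPsiEq, hsm]
  have hlog := abs_log_sub_log_le (G p) (A K p) (c/2) (by positivity) hGc2 hAc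
  have heq2 : -(1/lam) * Real.log (G p) - (-(1/lam) * Real.log (A K p))
      = -(1/lam) * (Real.log (G p) - Real.log (A K p)) := by ring
  rw [heq2, abs_mul]
  have habs : |-(1/lam)| = 1/lam := by
    rw [abs_neg, abs_of_pos (by positivity)]
  rw [habs]
  have hε₁2 : ε₁ ≤ lam * c * ε / 8 := min_le_right _ _
  have hstep : |Real.log (G p) - Real.log (A K p)| ≤ ε₁ / (c/2) := by
    refine le_trans hlog ?_
    gcongr

  have hlamne : lam ≠ 0 := hlam.ne'
  have hcne : c ≠ 0 := hc.ne'
  calc (1/lam) * |Real.log (G p) - Real.log (A K p)|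
      ≤ (1/lam) * (ε₁ / (c/2)) := by
        apply mul_le_mul_of_nonneg_left hstep (by positivity)
    _ ≤ (1/lam) * ((lam * c * ε / 8) / (c/2)) := by gcongr
    _ = ε/4 := by field_simp; ring
    _ < ε := by linarith
end

section
/- Let n ≥ 2 and let ψ : Δ̄_n → [0, ∞) be a continuous concave function that is strictly positive on Δ_n. Define Ŝ(ψ) = {x ∈ (0,∞)^n : ⟨q, x⟩ ≥ ψ(q) for all q ∈ Δ_n}. Then ψ(p) = inf_{x ∈ Ŝ(ψ)} ⟨p, x⟩ for every p ∈ Δ̄_n. -/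
open Filter Topology

lemma openSimplex_subset_closed (n : ℕ) : openSimplex n ⊆ closedSimplex n :=
  fun p hp => ⟨fun i => (hp.1 i).1.le, hp.2⟩

lemma isClosed_closedSimplex (n : ℕ) : IsClosed (closedSimplex n) := by
  have h : closedSimplex n
      = (⋂ i, {p : Fin n → ℝ | 0 ≤ p i}) ∩ {p : Fin n → ℝ | ∑ i, p i = 1} := by
    ext p; simp [closedSimplex, Set.mem_iInter]
  rw [h]
  exact (isClosed_iInter fun i => isClosed_le continuous_const (continuous_apply i)).inter
    (isClosed_eq (continuous_finset_sum _ fun i _ => continuous_apply i) continuous_const)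

lemma pert_mem_openSimplex (n : ℕ) (hn : 2 ≤ n) (p : Fin n → ℝ) (hp : p ∈ closedSimplex n)
    (t : ℝ) (ht0 : 0 < t) (ht1 : t ≤ 1) :
    (fun i => (1 - t) * p i + t * (1 / n)) ∈ openSimplex n := by
  have hn0 : (0:ℝ) < n := by
    have : (2:ℝ) ≤ n := by exact_mod_cast hn
    linarith
  have hpos : ∀ j, 0 < (1 - t) * p j + t * (1 / n) := by
    intro j
    have h1 : 0 ≤ (1 - t) * p j := mul_nonneg (by linarith) (hp.1 j)
    have h2 : 0 < t * (1 / n) := mul_pos ht0 (by positivity)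
    linarith
  have hsum : ∑ j, ((1 - t) * p j + t * (1 / n)) = 1 := by
    rw [Finset.sum_add_distrib, ← Finset.mul_sum, hp.2, Finset.sum_const,
      Finset.card_univ, Fintype.card_fin, nsmul_eq_mul]
    field_simp
    ring
  refine ⟨fun i => ⟨hpos i, ?_⟩, hsum⟩
  haveI : Nontrivial (Fin n) := Fin.nontrivial_iff_two_le.2 hn
  obtain ⟨j, hj⟩ := exists_ne i
  calc (1 - t) * p i + t * (1 / n)
      < ∑ k, ((1 - t) * p k + t * (1 / n)) :=
        Finset.single_lt_sum hj (Finset.mem_univ i) (Finset.mem_univ j) (hpos j)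
          (fun k _ _ => (hpos k).le)
    _ = 1 := hsum

/-- Every member of the dual set dominates `ψ` at every point of the closed simplex. -/
lemma psi_le_inner (n : ℕ) (hn : 2 ≤ n) (ψ : (Fin n → ℝ) → ℝ)
    (hcont : ContinuousOn ψ (closedSimplex n))
    (x : Fin n → ℝ) (hx : ∀ q ∈ openSimplex n, ψ q ≤ ∑ i, q i * x i)
    (p : Fin n → ℝ) (hp : p ∈ closedSimplex n) :
    ψ p ≤ ∑ i, p i * x i := by
  set u : ℕ → ℝ := fun k => 1 / ((k : ℝ) + 1) with hu
  set q : ℕ → (Fin n → ℝ) := fun k => fun i => (1 - u k) * p i + u k * (1 / n) with hq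
  have hu0 : ∀ k, 0 < u k := fun k => by positivity
  have hu1 : ∀ k, u k ≤ 1 := by
    intro k
    rw [hu]
    rw [div_le_one (by positivity)]
    simp
  have hmem : ∀ k, q k ∈ openSimplex n := fun k =>
    pert_mem_openSimplex n hn p hp (u k) (hu0 k) (hu1 k)
  have hutend : Filter.Tendsto u atTop (nhds 0) := tendsto_one_div_add_atTop_nhds_zero_nat
  have htend : Filter.Tendsto q atTop (nhds p) := by
    rw [tendsto_pi_nhds]
    intro i
    have : Filter.Tendsto (fun k => (1 - u k) * p i + u k * (1 / n)) atTop
        (nhds ((1 - 0) * p i + 0 * (1 / n))) := by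
      exact (((tendsto_const_nhds.sub hutend).mul tendsto_const_nhds).add
        (hutend.mul tendsto_const_nhds))
    have h : ((1 : ℝ) - 0) * p i + 0 * (1 / n) = p i := by ring
    rw [← h]
    exact this
  have hψ : Filter.Tendsto (fun k => ψ (q k)) atTop (nhds (ψ p)) := by
    refine (hcont p hp).tendsto.comp ?_
    rw [tendsto_nhdsWithin_iff]
    exact ⟨htend, Filter.Eventually.of_forall fun k =>
      openSimplex_subset_closed n (hmem k)⟩
  have hlin : Filter.Tendsto (fun k => ∑ i, q k i * x i) atTop (nhds (∑ i, p i * x i)) := by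
    refine tendsto_finset_sum _ fun i _ => ?_
    exact ((continuous_apply i).tendsto p).comp htend |>.mul tendsto_const_nhds
  exact le_of_tendsto_of_tendsto' hψ hlin fun k => hx (q k) (hmem k)

lemma sep_lemma (n : ℕ) (ψ : (Fin n → ℝ) → ℝ)
    (hcont : ContinuousOn ψ (closedSimplex n))
    (hconc : ConcaveOn ℝ (closedSimplex n) ψ)
    (hnonneg : ∀ p ∈ closedSimplex n, 0 ≤ ψ p)
    (p : Fin n → ℝ) (hp : p ∈ closedSimplex n) (ε : ℝ) (hε : 0 < ε) :
    ∃ x : Fin n → ℝ, (∀ i, 0 < x i) ∧ (∀ q ∈ closedSimplex n, ψ q ≤ ∑ i, q i * x i) ∧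
      ∑ i, p i * x i < ψ p + ε := by
  set C : Set ((Fin n → ℝ) × ℝ) := {z | z.1 ∈ closedSimplex n ∧ z.2 ≤ ψ z.1} with hC
  have hCconv : Convex ℝ C := hconc.convex_hypograph
  have hCclosed : IsClosed C := by
    refine IsSeqClosed.isClosed ?_
    intro z L hz hL
    have hL1 : Filter.Tendsto (fun k => (z k).1) atTop (nhds L.1) :=
      (continuous_fst.tendsto L).comp hL
    have hL2 : Filter.Tendsto (fun k => (z k).2) atTop (nhds L.2) :=
      (continuous_snd.tendsto L).comp hL
    have h1 : L.1 ∈ closedSimplex n :=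
      (isClosed_closedSimplex n).isSeqClosed (fun k => (hz k).1) hL1
    have hψt : Filter.Tendsto (fun k => ψ (z k).1) atTop (nhds (ψ L.1)) := by
      refine (hcont L.1 h1).tendsto.comp ?_
      rw [tendsto_nhdsWithin_iff]
      exact ⟨hL1, Filter.Eventually.of_forall fun k => (hz k).1⟩
    exact ⟨h1, le_of_tendsto_of_tendsto' hL2 hψt fun k => (hz k).2⟩
  have hnotmem : (p, ψ p + ε) ∉ C := fun h => by
    have := h.2; simp only at this; linarith
  obtain ⟨f, u, hfu, hupf⟩ := geometric_hahn_banach_closed_point hCconv hCclosed hnotmem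
  have hsplit : ∀ (q : Fin n → ℝ) (t : ℝ), f (q, t) = f (q, 0) + t * f (0, 1) := by
    intro q t
    have hqt : (q, t) = (q, (0:ℝ)) + t • ((0 : Fin n → ℝ), (1:ℝ)) := by
      rw [Prod.ext_iff]; constructor <;> simp
    rw [hqt, map_add, map_smul, smul_eq_mul]
  set e : Fin n → (Fin n → ℝ) := fun i => Pi.single i 1 with he
  have heΔ : ∀ i, e i ∈ closedSimplex n := by
    intro i
    refine ⟨fun j => ?_, ?_⟩
    · rw [he]; simp only [Pi.single_apply]; split <;> norm_num
    · simp [he, Pi.single_apply]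
  have hdecomp : ∀ q : Fin n → ℝ, f (q, 0) = ∑ i, q i * f (e i, 0) := by
    intro q
    have hq : (q, (0:ℝ)) = ∑ i, q i • ((e i : Fin n → ℝ), (0:ℝ)) := by
      rw [Prod.ext_iff]
      constructor
      · simp only [Prod.fst_sum, Prod.smul_mk]
        funext j
        simp [he, Finset.sum_apply, Pi.single_apply, mul_ite, Finset.sum_ite_eq']
      · simp [Prod.snd_sum]
    rw [hq, map_sum]
    refine Finset.sum_congr rfl fun i _ => ?_
    rw [map_smul, smul_eq_mul]
  set s : ℝ := f (0, 1) with hs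
  have h1 : f (p, 0) + ψ p * s < u := by
    have := hfu (p, ψ p) ⟨hp, le_refl _⟩
    rwa [hsplit] at this
  have h2 : u < f (p, 0) + (ψ p + ε) * s := by
    have := hupf
    rwa [hsplit] at this
  have hs_pos : 0 < s := by nlinarith
  set x : Fin n → ℝ := fun i => (u - f (e i, 0)) / s with hx
  have hval : ∀ q : Fin n → ℝ, ∑ i, q i = 1 →
      ∑ i, q i * x i = (u - f (q, 0)) / s := by
    intro q hq1
    rw [hx]
    have : ∑ i, q i * ((u - f (e i, 0)) / s) = (∑ i, (q i * u - q i * f (e i, 0))) / s := by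
      rw [Finset.sum_div]
      refine Finset.sum_congr rfl fun i _ => ?_
      field_simp
    rw [this, Finset.sum_sub_distrib, ← Finset.sum_mul, hq1, hdecomp, one_mul]
  have hxpos : ∀ i, 0 < x i := by
    intro i
    have hi := hfu (e i, ψ (e i)) ⟨heΔ i, le_refl _⟩
    rw [hsplit] at hi
    have h0 : 0 ≤ ψ (e i) := hnonneg _ (heΔ i)
    have : 0 < u - f (e i, 0) := by nlinarith
    exact div_pos this hs_pos
  have hdom : ∀ q ∈ closedSimplex n, ψ q ≤ ∑ i, q i * x i := by
    intro q hq
    rw [hval q hq.2]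
    have hqψ := hfu (q, ψ q) ⟨hq, le_refl _⟩
    rw [hsplit] at hqψ
    rw [le_div_iff₀ hs_pos]
    nlinarith
  refine ⟨x, hxpos, hdom, ?_⟩
  rw [hval p hp.2, div_lt_iff₀ hs_pos]
  nlinarith

/-- duality: for a continuous concave `ψ : Δ̄_n → [0,∞)` strictly
positive on `Δ_n` and `Ŝ(ψ) = {x ∈ (0,∞)^n : ⟨q,x⟩ ≥ ψ(q) for all q ∈ Δ_n}`, one has
`ψ(p) = inf_{x ∈ Ŝ(ψ)} ⟨p,x⟩` for every `p ∈ Δ̄_n`. -/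
theorem concave_duality_support_function (n : ℕ) (hn : 2 ≤ n)
    (ψ : (Fin n → ℝ) → ℝ)
    (hcont : ContinuousOn ψ (closedSimplex n))
    (hconc : ConcaveOn ℝ (closedSimplex n) ψ)
    (hnonneg : ∀ p ∈ closedSimplex n, 0 ≤ ψ p)
    (hpos : ∀ p ∈ openSimplex n, 0 < ψ p)
    (p : Fin n → ℝ) (hp : p ∈ closedSimplex n) :
    ψ p = sInf ((fun x => ∑ i, p i * x i) ''
      {x : Fin n → ℝ | (∀ i, 0 < x i) ∧ ∀ q ∈ openSimplex n, ψ q ≤ ∑ i, q i * x i}) := by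
  set S : Set (Fin n → ℝ) :=
    {x : Fin n → ℝ | (∀ i, 0 < x i) ∧ ∀ q ∈ openSimplex n, ψ q ≤ ∑ i, q i * x i} with hS
  set T := (fun x => ∑ i, p i * x i) '' S with hT
  have hlb : ∀ b ∈ T, ψ p ≤ b := by
    rintro b ⟨x, hxS, rfl⟩
    exact psi_le_inner n hn ψ hcont x hxS.2 p hp
  have hbdd : BddBelow T := ⟨ψ p, hlb⟩
  have hne : T.Nonempty := by
    obtain ⟨x, hx1, hx2, _⟩ := sep_lemma n ψ hcont hconc hnonneg p hp 1 one_pos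
    exact ⟨∑ i, p i * x i, ⟨x, ⟨hx1, fun q hq =>
      hx2 q (openSimplex_subset_closed n hq)⟩, rfl⟩⟩
  refine le_antisymm (le_csInf hne hlb) ?_
  refine le_of_forall_pos_le_add ?_
  intro ε hε
  obtain ⟨x, hx1, hx2, hx3⟩ := sep_lemma n ψ hcont hconc hnonneg p hp ε hε
  have hxT : (∑ i, p i * x i) ∈ T :=
    ⟨x, ⟨hx1, fun q hq => hx2 q (openSimplex_subset_closed n hq)⟩, rfl⟩
  exact (csInf_le hbdd hxT).trans hx3.le
end

section
/- Let n ≥ 2, let h : (0,∞)^n → [0,∞) be measurable, locally integrable and homogeneous of order α (i.e., h(κx) = κ^α h(x) for κ > 0) with n + α > 0, and fix p ∈ Δ_n with 0 < ∫_{R(p,1)} h(y) dy < ∞. Let X be a nonnegative real random variable with ℙ(X ≥ x) = exp(−∫_{R(p,x)} h(y) dy) for every x > 0. Then ∫_{R(p,x)} h(y) dy = x^{n+α} ∫_{R(p,1)} h(y) dy for all x > 0, the random variable X^{n+α} is exponentially distributed with rate ∫_{R(p,1)} h(y) dy, and 𝔼[X] = Γ(1/(n+α) + 1) · (∫_{R(p,1)}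 h(y) dy)^{−1/(n+α)}. -/
open MeasureTheory
open scoped Pointwise

/-- The open positive quadrant `(0,∞)^n`. -/
def quadrant (n : ℕ) : Set (Fin n → ℝ) := {x | ∀ i, 0 < x i}

/-- The region `R(p,a) = {x ∈ (0,∞)^n : ⟨p,x⟩ < a}`. -/
def Rset (n : ℕ) (p : Fin n → ℝ) (a : ℝ) : Set (Fin n → ℝ) :=
  {x | (∀ i, 0 < x i) ∧ ∑ i, p i * x i < a}

/-- with `h ≥ 0` measurable, locally integrable and homogeneous of
order `α` with `n + α > 0`, `p ∈ Δ_n` with `0 < ∫_{R(p,1)} h < ∞`, and `X ≥ 0` a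
random variable with `ℙ(X ≥ x) = exp(−∫_{R(p,x)} h)` for `x > 0`, one has
`∫_{R(p,x)} h = x^{n+α} ∫_{R(p,1)} h`, `X^{n+α}` is exponentially distributed with
rate `∫_{R(p,1)} h`, and `𝔼[X] = Γ(1/(n+α)+1)·(∫_{R(p,1)} h)^{−1/(n+α)}`. -/
theorem one_point_distribution (n : ℕ) (hn : 2 ≤ n) (α : ℝ) (hα : 0 < (n : ℝ) + α)
    (h : (Fin n → ℝ) → ℝ) (hhmeas : Measurable h) (hhnonneg : ∀ x ∈ quadrant n, 0 ≤ h x)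
    (hloc : ∀ A : Set (Fin n → ℝ), A ⊆ quadrant n → MeasurableSet A →
      Bornology.IsBounded A → IntegrableOn h A volume)
    (hhom : ∀ κ : ℝ, 0 < κ → ∀ x ∈ quadrant n, h (κ • x) = κ ^ α * h x)
    (p : Fin n → ℝ) (hp : p ∈ openSimplex n)
    (hIpos : 0 < ∫ y in Rset n p 1, h y)
    {Ω : Type*} [MeasurableSpace Ω] (P : Measure Ω) [IsProbabilityMeasure P]
    (X : Ω → ℝ) (hXmeas : Measurable X) (hXnonneg : ∀ ω, 0 ≤ X ω)
    (htail : ∀ x : ℝ, 0 < x →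
      P {ω | x ≤ X ω} = ENNReal.ofReal (Real.exp (-∫ y in Rset n p x, h y))) :
    (∀ x : ℝ, 0 < x →
      ∫ y in Rset n p x, h y = x ^ ((n : ℝ) + α) * ∫ y in Rset n p 1, h y) ∧
    Measure.map (fun ω => X ω ^ ((n : ℝ) + α)) P =
      ProbabilityTheory.expMeasure (∫ y in Rset n p 1, h y) ∧
    ∫ ω, X ω ∂P =
      Real.Gamma (1 / ((n : ℝ) + α) + 1) *
        (∫ y in Rset n p 1, h y) ^ (-(1 / ((n : ℝ) + α))) := by
  set β : ℝ := (n : ℝ) + α with hβdef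
  set I : ℝ := ∫ y in Rset n p 1, h y with hIdef
  have hβ : 0 < β := hα
  have hβ' : β ≠ 0 := hβ.ne'
  -- scaling of the region
  have hscale : ∀ x : ℝ, 0 < x → Rset n p x = x • Rset n p 1 := by
    intro x hx
    ext y
    rw [Set.mem_smul_set_iff_inv_smul_mem₀ hx.ne']
    have hsum : ∑ i, p i * (x⁻¹ • y) i = x⁻¹ * ∑ i, p i * y i := by
      rw [Finset.mul_sum]; congr 1; ext i; simp [Pi.smul_apply]; ring
    constructor
    · rintro ⟨h1, h2⟩
      refine ⟨fun i => by simpa using mul_pos (inv_pos.mpr hx) (h1 i), ?_⟩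
      rw [hsum, inv_mul_lt_iff₀ hx, mul_one]
      exact h2
    · rintro ⟨h1, h2⟩
      have h1' : ∀ i, 0 < y i := by
        intro i
        have := h1 i
        simp only [Pi.smul_apply, smul_eq_mul] at this
        nlinarith [inv_pos.mpr hx]
      refine ⟨h1', ?_⟩
      rw [hsum, inv_mul_lt_iff₀ hx, mul_one] at h2
      exact h2
  have hRmeas : ∀ a : ℝ, MeasurableSet (Rset n p a) := by
    intro a
    have : Rset n p a = (⋂ i, {y : Fin n → ℝ | 0 < y i}) ∩
        {y : Fin n → ℝ | ∑ i, p i * y i < a} := by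
      ext y; simp [Rset, Set.mem_iInter]
    rw [this]
    exact MeasurableSet.inter (MeasurableSet.iInter fun i =>
        measurableSet_lt measurable_const (measurable_pi_apply i))
      (measurableSet_lt (by fun_prop) measurable_const)
  have hRsub : Rset n p 1 ⊆ quadrant n := fun y hy => hy.1
  -- part 1
  have part1 : ∀ x : ℝ, 0 < x → ∫ y in Rset n p x, h y = x ^ β * I := by
    intro x hx
    have hxn : (0:ℝ) < x ^ n := by positivity
    have key := MeasureTheory.Measure.setIntegral_comp_smul_of_pos volume h (Rset n p 1) hx
    have hfr : Module.finrank ℝ (Fin n → ℝ) = n := by simp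
    rw [hfr, smul_eq_mul] at key
    have congr1 : ∫ y in Rset n p 1, h (x • y) = x ^ α * I := by
      calc ∫ y in Rset n p 1, h (x • y) = ∫ y in Rset n p 1, x ^ α * h y :=
            setIntegral_congr_fun (hRmeas 1) fun y hy => hhom x hx y (hRsub hy)
        _ = x ^ α * I := by rw [integral_const_mul]
    rw [congr1] at key
    have key2 := key.symm
    rw [inv_mul_eq_iff_eq_mul₀ (ne_of_gt hxn)] at key2
    have hsplit : x ^ β = x ^ n * x ^ α := by
      rw [hβdef, Real.rpow_add hx, Real.rpow_natCast]
    rw [hscale x hx, key2, hsplit]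
    ring
  -- tail probabilities
  have htail' : ∀ x : ℝ, 0 < x →
      P {ω | x ≤ X ω} = ENNReal.ofReal (Real.exp (-(I * x ^ β))) := by
    intro x hx
    rw [htail x hx, part1 x hx, mul_comm]
  have tailP : ∀ t : ℝ, 0 ≤ t →
      P {ω | t < X ω} = ENNReal.ofReal (Real.exp (-(I * t ^ β))) := by
    intro t ht
    have hU : {ω | t < X ω} = ⋃ k : ℕ, {ω | t + ((k : ℝ) + 1)⁻¹ ≤ X ω} := by
      ext ω
      simp only [Set.mem_setOf_eq, Set.mem_iUnion]
      constructor
      · intro hlt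
        obtain ⟨k, hk⟩ := exists_nat_one_div_lt (sub_pos.mpr hlt)
        exact ⟨k, by rw [one_div] at hk; linarith⟩
      · rintro ⟨k, hk⟩
        have : (0:ℝ) < ((k : ℝ) + 1)⁻¹ := by positivity
        linarith
    have hmono : Monotone fun k : ℕ => {ω | t + ((k : ℝ) + 1)⁻¹ ≤ X ω} := by
      intro a b hab ω hω
      simp only [Set.mem_setOf_eq] at hω ⊢
      have hle : ((b : ℝ) + 1)⁻¹ ≤ ((a : ℝ) + 1)⁻¹ := by
        apply inv_anti₀ (by positivity)
        have : (a : ℝ) ≤ (b : ℝ) := Nat.cast_le.mpr hab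
        linarith
      linarith
    have hlim := tendsto_measure_iUnion_atTop (μ := P) hmono
    rw [← hU] at hlim
    have heq : ∀ k : ℕ, P {ω | t + ((k : ℝ) + 1)⁻¹ ≤ X ω}
        = ENNReal.ofReal (Real.exp (-(I * (t + ((k : ℝ) + 1)⁻¹) ^ β))) :=
      fun k => htail' _ (by positivity)
    have hlim2 : Filter.Tendsto
        (fun k : ℕ => P {ω | t + ((k : ℝ) + 1)⁻¹ ≤ X ω}) Filter.atTop
        (nhds (ENNReal.ofReal (Real.exp (-(I * t ^ β))))) := by
      simp_rw [heq]
      apply ENNReal.tendsto_ofReal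
      apply Filter.Tendsto.comp Real.continuous_exp.continuousAt.tendsto
      apply Filter.Tendsto.neg
      apply Filter.Tendsto.const_mul
      have h1 : Filter.Tendsto (fun k : ℕ => t + ((k : ℝ) + 1)⁻¹) Filter.atTop (nhds t) := by
        have h2 : Filter.Tendsto (fun k : ℕ => ((k : ℝ) + 1)⁻¹) Filter.atTop (nhds 0) := by
          simpa only [one_div] using tendsto_one_div_add_atTop_nhds_zero_nat (𝕜 := ℝ)
        simpa using Filter.Tendsto.const_add t h2
      have hcont : ContinuousAt (fun s : ℝ => s ^ β) t :=
        Real.continuousAt_rpow_const t β (Or.inr hβ.le)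
      exact hcont.tendsto.comp h1
    exact tendsto_nhds_unique hlim hlim2
  -- CDF of X^β
  have hXb_nonneg : ∀ ω, 0 ≤ X ω ^ β := fun ω => Real.rpow_nonneg (hXnonneg ω) β
  have cdf : ∀ t : ℝ, P {ω | X ω ^ β ≤ t}
      = ENNReal.ofReal (if 0 ≤ t then 1 - Real.exp (-(I * t)) else 0) := by
    intro t
    rcases le_or_gt 0 t with ht | ht
    · rw [if_pos ht]
      have hset : {ω | X ω ^ β ≤ t} = {ω | X ω ≤ t ^ β⁻¹} := by
        ext ω
        simp only [Set.mem_setOf_eq]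
        rw [Real.le_rpow_inv_iff_of_pos (hXnonneg ω) ht hβ]
      have hcompl : {ω | X ω ≤ t ^ β⁻¹}ᶜ = {ω | t ^ β⁻¹ < X ω} := by
        ext ω; simp [not_le]
      have hc : 0 ≤ t ^ β⁻¹ := Real.rpow_nonneg ht _
      have htb : (t ^ β⁻¹) ^ β = t := Real.rpow_inv_rpow ht hβ'
      have h1 : P {ω | t ^ β⁻¹ < X ω} = ENNReal.ofReal (Real.exp (-(I * t))) := by
        rw [tailP _ hc, htb]
      have hmeas2 : MeasurableSet {ω | t ^ β⁻¹ < X ω} := by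
        have : {ω | t ^ β⁻¹ < X ω} = X ⁻¹' (Set.Ioi (t ^ β⁻¹)) := rfl
        rw [this]; exact hXmeas measurableSet_Ioi
      rw [hset, ← compl_compl {ω | X ω ≤ t ^ β⁻¹}, hcompl,
        measure_compl hmeas2 (measure_ne_top P _), h1, measure_univ,
        ENNReal.ofReal_sub 1 (Real.exp_pos _).le, ENNReal.ofReal_one]
    · rw [if_neg (not_le.mpr ht)]
      have : {ω | X ω ^ β ≤ t} = ∅ := by
        ext ω
        simp only [Set.mem_setOf_eq, Set.mem_empty_iff_false, iff_false, not_le]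
        exact lt_of_lt_of_le ht (hXb_nonneg ω)
      rw [this]
      simp
  -- part 2
  have hXbmeas : Measurable fun ω => X ω ^ β :=
    (Real.continuous_rpow_const hβ.le).measurable.comp hXmeas
  have part2 : Measure.map (fun ω => X ω ^ β) P = ProbabilityTheory.expMeasure I := by
    haveI : IsProbabilityMeasure (Measure.map (fun ω => X ω ^ β) P) :=
      Measure.isProbabilityMeasure_map hXbmeas.aemeasurable
    haveI : IsProbabilityMeasure (ProbabilityTheory.expMeasure I) :=
      ProbabilityTheory.isProbabilityMeasure_expMeasure hIpos
    refine Measure.ext_of_Iic _ _ (fun t => ?_)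
    rw [Measure.map_apply hXbmeas measurableSet_Iic]
    have hpre : (fun ω => X ω ^ β) ⁻¹' (Set.Iic t) = {ω | X ω ^ β ≤ t} := rfl
    rw [hpre, cdf t]
    have hexp : ProbabilityTheory.expMeasure I (Set.Iic t)
        = ∫⁻ y in Set.Iic t, ProbabilityTheory.exponentialPDF I y := by
      rw [ProbabilityTheory.expMeasure, ProbabilityTheory.gammaMeasure,
        withDensity_apply _ measurableSet_Iic]
      rfl
    rw [hexp, ProbabilityTheory.lintegral_exponentialPDF_eq_antiDeriv hIpos t]
  -- part 3
  have hq : (0:ℝ) < β⁻¹ := by positivity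
  have hg_int : IntegrableOn (fun y : ℝ => y ^ (β⁻¹ - 1) * Real.exp (-(I * y)))
      (Set.Ioi 0) := by
    have hbase := integrableOn_rpow_mul_exp_neg_mul_rpow (p := 1) (s := β⁻¹ - 1) (b := I)
      (by linarith) zero_lt_one hIpos
    apply hbase.congr_fun ?_ measurableSet_Ioi
    intro y hy
    simp only [Real.rpow_one, neg_mul]
  have hg_val : ∫ y in Set.Ioi 0, y ^ (β⁻¹ - 1) * Real.exp (-(I * y))
      = (1 / I) ^ β⁻¹ * Real.Gamma β⁻¹ := Real.integral_rpow_mul_exp_neg_mul_Ioi hq hIpos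
  have hJ : ∫ t in Set.Ioi 0, Real.exp (-(I * t ^ β))
      = β⁻¹ * ((1 / I) ^ β⁻¹ * Real.Gamma β⁻¹) := by
    have key := integral_comp_rpow_Ioi_of_pos
      (g := fun y : ℝ => β⁻¹ * (y ^ (β⁻¹ - 1) * Real.exp (-(I * y)))) hβ
    have hLHS : ∫ x in Set.Ioi 0,
        (β * x ^ (β - 1)) • (β⁻¹ * ((x ^ β) ^ (β⁻¹ - 1) * Real.exp (-(I * x ^ β))))
        = ∫ t in Set.Ioi 0, Real.exp (-(I * t ^ β)) := by
      apply setIntegral_congr_fun measurableSet_Ioi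
      intro x hx
      have hx0 : (0:ℝ) < x := hx
      have h1 : (x ^ β) ^ (β⁻¹ - 1) = x ^ (1 - β) := by
        rw [← Real.rpow_mul hx0.le]
        congr 1
        field_simp
      have h2 : x ^ (β - 1) * x ^ (1 - β) = 1 := by
        rw [← Real.rpow_add hx0]
        norm_num
      simp only [smul_eq_mul, h1]
      calc β * x ^ (β - 1) * (β⁻¹ * (x ^ (1 - β) * Real.exp (-(I * x ^ β))))
          = (β * β⁻¹) * (x ^ (β - 1) * x ^ (1 - β)) * Real.exp (-(I * x ^ β)) := by ring
        _ = Real.exp (-(I * x ^ β)) := by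
            rw [mul_inv_cancel₀ hβ', h2]; ring
    rw [hLHS] at key
    rw [key, MeasureTheory.integral_const_mul, hg_val]
  have hf_int : IntegrableOn (fun t : ℝ => Real.exp (-(I * t ^ β))) (Set.Ioi 0) := by
    have hderiv : ∀ y ∈ Set.Ioi (0:ℝ), HasDerivWithinAt (fun y : ℝ => y ^ β⁻¹)
        (β⁻¹ * y ^ (β⁻¹ - 1)) (Set.Ioi 0) y := fun y hy =>
      (Real.hasDerivAt_rpow_const (Or.inl (ne_of_gt hy))).hasDerivWithinAt
    have hinj : Set.InjOn (fun y : ℝ => y ^ β⁻¹) (Set.Ioi 0) := by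
      intro a ha b hb hab
      have := congrArg (fun z : ℝ => z ^ β) hab
      simpa [Real.rpow_inv_rpow (le_of_lt ha) hβ', Real.rpow_inv_rpow (le_of_lt hb) hβ']
        using this
    have himg : (fun y : ℝ => y ^ β⁻¹) '' Set.Ioi 0 = Set.Ioi 0 := by
      ext t
      constructor
      · rintro ⟨y, hy, rfl⟩
        exact Real.rpow_pos_of_pos hy _
      · intro ht
        exact ⟨t ^ β, Real.rpow_pos_of_pos ht _,
          Real.rpow_rpow_inv (le_of_lt ht) hβ'⟩
    have hiff := integrableOn_image_iff_integrableOn_abs_deriv_smul measurableSet_Ioi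
      hderiv hinj (fun t => Real.exp (-(I * t ^ β)))
    rw [himg] at hiff
    rw [hiff]
    refine MeasureTheory.IntegrableOn.congr_fun (hg_int.const_mul β⁻¹)
      (fun y hy => ?_) measurableSet_Ioi
    have hy0 : (0:ℝ) < y := hy
    have habs : |β⁻¹ * y ^ (β⁻¹ - 1)| = β⁻¹ * y ^ (β⁻¹ - 1) := by
      apply abs_of_nonneg
      positivity
    simp only [smul_eq_mul, habs, Real.rpow_inv_rpow hy0.le hβ']
    ring
  -- expectation
  have part3 : ∫ ω, X ω ∂P = Real.Gamma (1 / β + 1) * I ^ (-(1 / β)) := by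
    have hXae : 0 ≤ᵐ[P] X := Filter.Eventually.of_forall hXnonneg
    rw [integral_eq_lintegral_of_nonneg_ae hXae hXmeas.aestronglyMeasurable]
    rw [lintegral_eq_lintegral_meas_le P hXae hXmeas.aemeasurable]
    have hcongr : ∫⁻ t in Set.Ioi 0, P {a | t ≤ X a}
        = ∫⁻ t in Set.Ioi (0:ℝ), ENNReal.ofReal (Real.exp (-(I * t ^ β))) := by
      apply setLIntegral_congr_fun measurableSet_Ioi
      exact fun t ht => htail' t ht
    rw [hcongr,
      ← ofReal_integral_eq_lintegral_ofReal hf_int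
        (Filter.Eventually.of_forall fun t => (Real.exp_pos _).le),
      ENNReal.toReal_ofReal (integral_nonneg fun t => (Real.exp_pos _).le), hJ]
    have hΓ : Real.Gamma (1 / β + 1) = β⁻¹ * Real.Gamma β⁻¹ := by
      rw [one_div, Real.Gamma_add_one (ne_of_gt hq)]
    have hIrp : I ^ (-(1 / β)) = (1 / I) ^ β⁻¹ := by
      rw [one_div, one_div, Real.inv_rpow hIpos.le, Real.rpow_neg hIpos.le]
    rw [hΓ, hIrp]
    ring
  exact ⟨part1, part2, part3⟩
end

section
/- Let n ≥ 2, γ > 0 and α_1, …, α_n > −1, set α = ∑_{i=1}^n α_i and h(x) = γ ∏_{i=1}^n x_i^{α_i} for x ∈ (0,∞)^n. Let Ψ be a random element of C (a measurable map from a probability space into the continuous functions on Δ̄_n, taking values in the nonnegative continuous concave functions) such that for every p ∈ Δ_n and every x > 0, ℙ(Ψ(p) ≥ x) = exp(−x^{n+α} ∫_{R(p,1)} h(y) dy). Then with probability 1, Ψ vanishes identically on the boundary ∂Δ_n = Δ̄_n ∖ Δ_n. -/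
open MeasureTheory

open Set

lemma oneDim_int {r b : ℝ} (hr : -1 < r) (hb : 0 < b) :
    ∫ x in Set.Ioo 0 b, x ^ r = b ^ (r+1) / (r+1) := by
  rw [← MeasureTheory.integral_Ioc_eq_integral_Ioo, ← intervalIntegral.integral_of_le hb.le,
    integral_rpow (Or.inl hr), Real.zero_rpow (by linarith), sub_zero]

lemma box_indicator_eq (n : ℕ) (αv c : Fin n → ℝ) :
    (fun y : Fin n → ℝ => ∏ i, (Set.Ioo (0:ℝ) (c i)).indicator (fun t => t ^ αv i) (y i))
      = (Set.univ.pi fun i => Set.Ioo 0 (c i)).indicator (fun y => ∏ i, y i ^ αv i) := by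
  funext y
  by_cases h : y ∈ Set.univ.pi fun i => Set.Ioo 0 (c i)
  · rw [Set.indicator_of_mem h]
    exact Finset.prod_congr rfl fun i _ => Set.indicator_of_mem (h i (Set.mem_univ i)) _
  · rw [Set.indicator_of_notMem h]
    have hex : ∃ i, y i ∉ Set.Ioo 0 (c i) := by
      by_contra hcon; push_neg at hcon; exact h fun i _ => hcon i
    obtain ⟨i, hi⟩ := hex
    exact Finset.prod_eq_zero (Finset.mem_univ i) (Set.indicator_of_notMem hi _)

lemma box_integrableOn (n : ℕ) (αv c : Fin n → ℝ) (hαv : ∀ i, -1 < αv i) (hc : ∀ i, 0 < c i) :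
    IntegrableOn (fun y : Fin n → ℝ => ∏ i, y i ^ αv i)
      (Set.univ.pi fun i => Set.Ioo 0 (c i)) := by
  refine (integrable_indicator_iff
    (MeasurableSet.univ_pi fun i => measurableSet_Ioo)).1 ?_
  rw [← box_indicator_eq]
  exact Integrable.fintype_prod fun i => (integrable_indicator_iff measurableSet_Ioo).2
    ((intervalIntegral.integrableOn_Ioo_rpow_iff (hc i)).2 (hαv i))

lemma box_integral (n : ℕ) (αv c : Fin n → ℝ) (hαv : ∀ i, -1 < αv i) (hc : ∀ i, 0 < c i) :
    ∫ y in Set.univ.pi fun i => Set.Ioo 0 (c i), ∏ i, y i ^ αv i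
      = ∏ i, c i ^ (αv i + 1) / (αv i + 1) := by
  rw [← MeasureTheory.integral_indicator (MeasurableSet.univ_pi fun i => measurableSet_Ioo),
    ← box_indicator_eq, MeasureTheory.integral_fintype_prod_volume_eq_prod
      (f := fun i (t : ℝ) => (Set.Ioo (0:ℝ) (c i)).indicator (fun t => t ^ αv i) t)]
  exact Finset.prod_congr rfl fun i _ => by
    rw [MeasureTheory.integral_indicator measurableSet_Ioo, oneDim_int (hαv i) (hc i)]





/-- the special near-boundary point -/
noncomputable def wpt (n : ℕ) (j : Fin n) (s : ℝ) : Fin n → ℝ :=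
  fun i => if i = j then s else (1 - s) / ((n : ℝ) - 1)

lemma wpt_sum (n : ℕ) (hn : 2 ≤ n) (j : Fin n) (s : ℝ) : ∑ i, wpt n j s i = 1 := by
  have he : (1:ℝ) ≤ (n:ℝ) - 1 := by
    have : (2:ℝ) ≤ (n:ℝ) := by exact_mod_cast hn
    linarith
  rw [← Finset.add_sum_erase _ _ (Finset.mem_univ j)]
  have h1 : wpt n j s j = s := if_pos rfl
  have h2 : ∑ i ∈ Finset.univ.erase j, wpt n j s i
      = ((Finset.univ.erase j).card : ℝ) * ((1 - s) / ((n : ℝ) - 1)) := by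
    rw [Finset.sum_congr rfl fun i hi =>
      (show wpt n j s i = (1 - s) / ((n : ℝ) - 1) from if_neg (Finset.ne_of_mem_erase hi))]
    rw [Finset.sum_const, nsmul_eq_mul]
  have hcard : (Finset.univ.erase j).card = n - 1 := by
    rw [Finset.card_erase_of_mem (Finset.mem_univ j), Finset.card_univ, Fintype.card_fin]
  have hcast : (((n:ℕ) - 1 : ℕ) : ℝ) = (n:ℝ) - 1 := by
    have : 1 ≤ n := le_trans (by norm_num) hn
    push_cast [Nat.cast_sub this]; ring
  rw [h1, h2, hcard, hcast]
  field_simp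
  ring

lemma wpt_mem_open (n : ℕ) (hn : 2 ≤ n) (j : Fin n) {s : ℝ} (hs0 : 0 < s) (hs1 : s ≤ 1/2) :
    wpt n j s ∈ openSimplex n := by
  have he : (1:ℝ) ≤ (n:ℝ) - 1 := by
    have : (2:ℝ) ≤ (n:ℝ) := by exact_mod_cast hn
    linarith
  refine ⟨fun i => ?_, wpt_sum n hn j s⟩
  unfold wpt
  by_cases h : i = j
  · rw [if_pos h]; constructor <;> linarith
  · rw [if_neg h]
    constructor
    · apply div_pos (by linarith) (by linarith)
    · calc (1 - s) / ((n:ℝ) - 1) ≤ (1 - s) / 1 := by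
            apply div_le_div_of_nonneg_left (by linarith) (by norm_num) he
        _ < 1 := by linarith

lemma wpt_pos (n : ℕ) (hn : 2 ≤ n) (j : Fin n) {s : ℝ} (hs0 : 0 < s) (hs1 : s ≤ 1/2) :
    ∀ i, 0 < wpt n j s i := fun i => ((wpt_mem_open n hn j hs0 hs1).1 i).1

lemma concave_boundary_push (n : ℕ) (hn : 2 ≤ n) {f : (Fin n → ℝ) → ℝ}
    (hconc : ConcaveOn ℝ (closedSimplex n) f)
    (hnonneg : ∀ p ∈ closedSimplex n, 0 ≤ f p)
    {q : Fin n → ℝ} (hq : q ∈ closedSimplex n) {j : Fin n} (hqj : q j = 0)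
    {t : ℝ} (ht0 : 0 < t) (ht1 : t ≤ 1/2) :
    f q / (4 * ((n:ℝ) - 1)) ≤ f (wpt n j (t / n)) := by
  have hn2 : (2:ℝ) ≤ (n:ℝ) := by exact_mod_cast hn
  have hnpos : (0:ℝ) < n := by linarith
  have he : (1:ℝ) ≤ (n:ℝ) - 1 := by linarith
  have hq1 : ∀ i, q i ≤ 1 := by
    intro i
    calc q i ≤ ∑ i, q i := Finset.single_le_sum (fun i _ => hq.1 i) (Finset.mem_univ i)
      _ = 1 := hq.2
  set s : ℝ := t / n with hs_def
  have hs0 : 0 < s := div_pos ht0 hnpos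
  have hsn : s * n = t := div_mul_cancel₀ t hnpos.ne'
  have hs1 : s ≤ 1/2 := by
    rw [hs_def, div_le_iff₀ hnpos]
    nlinarith
  -- step 1 : the point p
  set p0 : Fin n → ℝ := fun _ => 1 / n with hp0_def
  have hp0 : p0 ∈ closedSimplex n := by
    constructor
    · intro i; positivity
    · simp [hp0_def, Finset.sum_const, Finset.card_univ]
      field_simp
  set p : Fin n → ℝ := (1 - t) • q + t • p0 with hp_def
  have hp_mem : p ∈ closedSimplex n := by
    constructor
    · intro i
      have := hq.1 i
      simp only [hp_def, Pi.add_apply, Pi.smul_apply, smul_eq_mul, hp0_def]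
      have : 0 ≤ (1 - t) * q i := by nlinarith
      have h2 : 0 ≤ t * (1 / (n:ℝ)) := by positivity
      linarith
    · simp only [hp_def, Pi.add_apply, Pi.smul_apply, smul_eq_mul, hp0_def]
      rw [Finset.sum_add_distrib, ← Finset.mul_sum, ← Finset.mul_sum, hq.2,
        Finset.sum_const, Finset.card_univ, Fintype.card_fin, nsmul_eq_mul]
      field_simp
      ring
  have hfp : (1 - t) * f q ≤ f p := by
    have := hconc.2 hq hp0 (by linarith : (0:ℝ) ≤ 1 - t) ht0.le (by ring)
    have h0 : 0 ≤ f p0 := hnonneg _ hp0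
    simp only [smul_eq_mul] at this
    nlinarith
  have hpj : p j = s := by
    simp [hp_def, hqj, hp0_def, hs_def, div_eq_mul_inv, mul_comm]
  have hple : ∀ i, p i ≤ 1 := by
    intro i
    simp only [hp_def, Pi.add_apply, Pi.smul_apply, smul_eq_mul, hp0_def]
    have h1 : (1 - t) * q i ≤ (1 - t) * 1 := by nlinarith [hq.1 i, hq1 i]
    have h2 : t * (1/(n:ℝ)) ≤ t * 1 := by
      apply mul_le_mul_of_nonneg_left _ ht0.le
      rw [div_le_one hnpos]; linarith
    linarith
  have hppos : ∀ i, 0 ≤ p i := hp_mem.1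
  -- step 2 : from p to wpt
  set μ : ℝ := 1 / (2 * ((n:ℝ) - 1)) with hμ_def
  have hμ0 : 0 < μ := by positivity
  have hμhalf : μ ≤ 1/2 := by
    rw [hμ_def, div_le_div_iff₀ (by linarith) (by norm_num)]
    linarith
  set lam : ℝ := 1 - μ with hlam_def
  have hlam0 : 0 < lam := by simp only [hlam_def]; linarith
  set w : Fin n → ℝ := wpt n j s with hw_def
  set r : Fin n → ℝ := lam⁻¹ • (w - μ • p) with hr_def
  have hwcomb : w = μ • p + lam • r := by
    funext i
    simp only [hr_def, Pi.smul_apply, Pi.add_apply, Pi.sub_apply, smul_eq_mul]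
    field_simp
    ring
  have hr_mem : r ∈ closedSimplex n := by
    constructor
    · intro i
      simp only [hr_def, Pi.smul_apply, Pi.sub_apply, smul_eq_mul]
      have : μ * p i ≤ w i := by
        by_cases h : i = j
        · have hwj : w i = s := if_pos h
          have hpi : p i = s := h ▸ hpj
          rw [hwj, hpi]
          nlinarith
        · have hwi : w i = (1 - s) / ((n:ℝ) - 1) := if_neg h
          rw [hwi]
          have h1 : μ * p i ≤ μ := by
            have := mul_le_mul_of_nonneg_left (hple i) hμ0.le
            simpa using this
          have h2 : μ ≤ (1 - s) / ((n:ℝ) - 1) := by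
            rw [hμ_def, div_le_div_iff₀ (by linarith) (by linarith)]
            nlinarith
          linarith
      have h2 : 0 ≤ w i - μ * p i := by linarith
      positivity
    · simp only [hr_def, Pi.smul_apply, Pi.sub_apply, smul_eq_mul]
      rw [← Finset.mul_sum, Finset.sum_sub_distrib, ← Finset.mul_sum]
      rw [show ∑ i, w i = 1 from wpt_sum n hn j s, hp_mem.2]
      field_simp [hlam_def]
      linarith
  have hfr : 0 ≤ f r := hnonneg _ hr_mem
  have hfw : μ * f p + lam * f r ≤ f w := by
    have := hconc.2 hp_mem hr_mem hμ0.le hlam0.le (by simp [hlam_def])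
    simp only [smul_eq_mul] at this
    rw [hwcomb]
    exact this
  have hfq0 : 0 ≤ f q := hnonneg _ hq
  have hfp0 : 0 ≤ f p := hnonneg _ hp_mem
  have key1 : μ * ((1 - t) * f q) ≤ f w := by
    have k1 := mul_le_mul_of_nonneg_left hfp hμ0.le
    have k2 := mul_nonneg hlam0.le hfr
    linarith
  have h2 : μ * ((1 - t) * f q) * (4 * ((n:ℝ) - 1)) = 2 * ((1 - t) * f q) := by
    rw [hμ_def]; field_simp; ring
  have key2 : f q / (4 * ((n:ℝ) - 1)) ≤ μ * ((1 - t) * f q) := by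
    rw [div_le_iff₀ (by linarith), h2]
    nlinarith [mul_nonneg hfq0 (by linarith : (0:ℝ) ≤ 1 - 2*t)]
  linarith



lemma Rset_measurable (n : ℕ) (w : Fin n → ℝ) (a : ℝ) : MeasurableSet (Rset n w a) := by
  have h1 : MeasurableSet {x : Fin n → ℝ | ∀ i, 0 < x i} := by
    rw [Set.setOf_forall]
    exact MeasurableSet.iInter fun i => measurableSet_lt measurable_const (measurable_pi_apply i)
  have h2 : MeasurableSet {x : Fin n → ℝ | ∑ i, w i * x i < a} :=
    measurableSet_lt (Finset.measurable_sum _ fun i _ =>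
      (measurable_pi_apply i).const_mul _) measurable_const
  exact h1.inter h2

lemma box_subset_Rset (n : ℕ) (hn : 0 < n) (w : Fin n → ℝ) (hw : ∀ i, 0 < w i) :
    (Set.univ.pi fun i => Set.Ioo 0 (1/((n:ℝ) * w i))) ⊆ Rset n w 1 := by
  have : Nonempty (Fin n) := ⟨⟨0, hn⟩⟩
  have hnR : (0:ℝ) < n := by exact_mod_cast hn
  intro x hx
  have h1 : ∀ i, 0 < x i := fun i => (hx i (Set.mem_univ i)).1
  refine ⟨h1, ?_⟩
  have hlt : ∀ i ∈ Finset.univ, w i * x i < 1/(n:ℝ) := by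
    intro i _
    have := (hx i (Set.mem_univ i)).2
    have h2 : w i * x i < w i * (1/((n:ℝ) * w i)) := by
      exact mul_lt_mul_of_pos_left this (hw i)
    have h3 : w i * (1/((n:ℝ) * w i)) = 1/(n:ℝ) := by
      rw [mul_one_div, div_eq_div_iff (mul_pos hnR (hw i)).ne' hnR.ne']
      ring
    linarith
  calc ∑ i, w i * x i < ∑ _i : Fin n, 1/(n:ℝ) :=
        Finset.sum_lt_sum_of_nonempty Finset.univ_nonempty hlt
    _ = 1 := by
        rw [Finset.sum_const, Finset.card_univ, Fintype.card_fin, nsmul_eq_mul]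
        field_simp

lemma Rset_subset_box (n : ℕ) (w : Fin n → ℝ) (hw : ∀ i, 0 < w i) :
    Rset n w 1 ⊆ Set.univ.pi fun i => Set.Ioo 0 (1/(w i)) := by
  intro x hx i _
  refine ⟨hx.1 i, ?_⟩
  have h1 : w i * x i ≤ ∑ k, w k * x k :=
    Finset.single_le_sum (fun k _ => (mul_pos (hw k) (hx.1 k)).le) (Finset.mem_univ i)
  rw [lt_div_iff₀ (hw i)]
  have := hx.2
  nlinarith





lemma Rset_integral_ge (n : ℕ) (hn : 2 ≤ n) (γ : ℝ) (hγ : 0 < γ) (αv : Fin n → ℝ)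
    (hαv : ∀ i, -1 < αv i) (w : Fin n → ℝ) (hw : ∀ i, 0 < w i) :
    γ * ∏ i, ((1/((n:ℝ) * w i)) ^ (αv i + 1) / (αv i + 1))
      ≤ ∫ y in Rset n w 1, γ * ∏ i, y i ^ αv i := by
  have hn0 : 0 < n := lt_of_lt_of_le (by norm_num) hn
  have hnR : (0:ℝ) < n := by exact_mod_cast hn0
  have hc : ∀ i, 0 < 1/((n:ℝ) * w i) := fun i => div_pos one_pos (mul_pos hnR (hw i))
  have hd : ∀ i, (0:ℝ) < 1/(w i) := fun i => div_pos one_pos (hw i)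
  have hint : IntegrableOn (fun y : Fin n → ℝ => ∏ i, y i ^ αv i) (Rset n w 1) :=
    (box_integrableOn n αv _ hαv hd).mono_set (Rset_subset_box n w hw)
  rw [MeasureTheory.integral_const_mul]
  apply mul_le_mul_of_nonneg_left _ hγ.le
  rw [← box_integral n αv _ hαv hc]
  refine MeasureTheory.setIntegral_mono_set hint ?_ ?_
  · refine (MeasureTheory.ae_restrict_iff' (Rset_measurable n w 1)).2
      (Filter.Eventually.of_forall fun y hy => ?_)
    exact Finset.prod_nonneg fun i _ => Real.rpow_nonneg (hy.1 i).le _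
  · exact HasSubset.Subset.eventuallyLE (box_subset_Rset n hn0 w hw)

lemma prod_bound (n : ℕ) (hn : 2 ≤ n) (αv : Fin n → ℝ) (hαv : ∀ i, -1 < αv i)
    (j : Fin n) {s : ℝ} (hs0 : 0 < s) (hs1 : s ≤ 1/2) :
    (((n:ℝ) ^ (-(αv j + 1)) / (αv j + 1)) *
        ∏ i ∈ Finset.univ.erase j, ((1/2:ℝ) ^ (αv i + 1) / (αv i + 1)))
      * s ^ (-(αv j + 1))
    ≤ ∏ i, ((1/((n:ℝ) * wpt n j s i)) ^ (αv i + 1) / (αv i + 1)) := by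
  have hnR : (2:ℝ) ≤ n := by exact_mod_cast hn
  have hnpos : (0:ℝ) < n := by linarith
  have hw := wpt_pos n hn j hs0 hs1
  have ha : ∀ i, (0:ℝ) < αv i + 1 := fun i => by linarith [hαv i]
  rw [← Finset.mul_prod_erase _ _ (Finset.mem_univ j)]
  have hj : wpt n j s j = s := if_pos rfl
  have hfac : (1/((n:ℝ) * wpt n j s j)) ^ (αv j + 1) / (αv j + 1)
      = ((n:ℝ) ^ (-(αv j + 1)) / (αv j + 1)) * s ^ (-(αv j + 1)) := by
    rw [hj, one_div, Real.inv_rpow (by positivity),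
      ← Real.rpow_neg (by positivity),
      Real.mul_rpow hnpos.le hs0.le]
    ring
  rw [hfac]
  have hD : (∏ i ∈ Finset.univ.erase j, ((1/2:ℝ) ^ (αv i + 1) / (αv i + 1)))
      ≤ ∏ i ∈ Finset.univ.erase j, ((1/((n:ℝ) * wpt n j s i)) ^ (αv i + 1) / (αv i + 1)) := by
    apply Finset.prod_le_prod
    · intro i _
      exact div_nonneg (Real.rpow_nonneg (by norm_num) _) (ha i).le
    · intro i hi
      have hne := Finset.ne_of_mem_erase hi
      have hwi : wpt n j s i = (1 - s)/((n:ℝ)-1) := if_neg hne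
      apply (div_le_div_iff_of_pos_right (ha i)).2
      apply Real.rpow_le_rpow (by norm_num) ?_ (ha i).le
      have hden : (n:ℝ) * wpt n j s i ≤ 2 := by
        rw [hwi, mul_div_assoc', div_le_iff₀ (by linarith : (0:ℝ) < (n:ℝ)-1)]
        nlinarith
      have hdenpos : 0 < (n:ℝ) * wpt n j s i := mul_pos hnpos (hw i)
      calc (1:ℝ)/2 ≤ 1/((n:ℝ) * wpt n j s i) := one_div_le_one_div_of_le hdenpos hden
        _ = 1/((n:ℝ) * wpt n j s i) := rfl
  have hFs : 0 ≤ ((n:ℝ) ^ (-(αv j + 1)) / (αv j + 1)) * s ^ (-(αv j + 1)) :=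
    mul_nonneg (div_nonneg (Real.rpow_nonneg hnpos.le _) (ha j).le)
      (Real.rpow_nonneg hs0.le _)
  calc ((n:ℝ) ^ (-(αv j + 1)) / (αv j + 1) *
        ∏ i ∈ Finset.univ.erase j, ((1/2:ℝ) ^ (αv i + 1) / (αv i + 1))) * s ^ (-(αv j + 1))
      = (((n:ℝ) ^ (-(αv j + 1)) / (αv j + 1)) * s ^ (-(αv j + 1))) *
        ∏ i ∈ Finset.univ.erase j, ((1/2:ℝ) ^ (αv i + 1) / (αv i + 1)) := by ring
    _ ≤ _ := mul_le_mul_of_nonneg_left hD hFs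



lemma sq_pos (n : ℕ) (hn : 2 ≤ n) (k : ℕ) : (0:ℝ) < (1/2)^(k+1) / n := by
  have hnR : (2:ℝ) ≤ (n:ℝ) := by exact_mod_cast hn
  positivity

lemma sq_le_half (n : ℕ) (hn : 2 ≤ n) (k : ℕ) : ((1/2:ℝ))^(k+1) / n ≤ 1/2 := by
  have hnR : (2:ℝ) ≤ (n:ℝ) := by exact_mod_cast hn
  have h1 : ((1/2:ℝ))^(k+1) ≤ 1/2 := by
    calc ((1/2:ℝ))^(k+1) ≤ (1/2:ℝ)^1 :=
          pow_le_pow_of_le_one (by norm_num) (by norm_num) (by omega)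
      _ = 1/2 := pow_one _
  calc ((1/2:ℝ))^(k+1) / n ≤ ((1/2:ℝ))^(k+1) / 1 := by
        apply div_le_div_of_nonneg_left (by positivity) (by norm_num) (by linarith)
    _ = ((1/2:ℝ))^(k+1) := div_one _
    _ ≤ 1/2 := h1

lemma null_aux (n : ℕ) (hn : 2 ≤ n)
    (γ : ℝ) (hγ : 0 < γ) (αv : Fin n → ℝ) (hαv : ∀ i, -1 < αv i)
    {Ω : Type*} [MeasurableSpace Ω] (P : Measure Ω) [IsProbabilityMeasure P]
    (Ψ : Ω → (Fin n → ℝ) → ℝ)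
    (htail : ∀ p ∈ openSimplex n, ∀ x : ℝ, 0 < x →
      P {ω | x ≤ Ψ ω p} = ENNReal.ofReal (Real.exp
        (-(x ^ ((n : ℝ) + ∑ i, αv i) *
          ∫ y in Rset n p 1, γ * ∏ i, y i ^ αv i))))
    (j : Fin n) (c : ℝ) (hc : 0 < c) :
    P (⋂ k : ℕ, {ω | c ≤ Ψ ω (wpt n j ((1/2)^(k+1)/n))}) = 0 := by
  have hn0 : 0 < n := lt_of_lt_of_le (by norm_num) hn
  have hnR : (2:ℝ) ≤ (n:ℝ) := by exact_mod_cast hn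
  have : Nonempty (Fin n) := ⟨⟨0, hn0⟩⟩
  have hα : -(n:ℝ) < ∑ i, αv i := by
    have h := Finset.sum_lt_sum_of_nonempty (Finset.univ_nonempty (α := Fin n))
      (fun i (_ : i ∈ Finset.univ) => hαv i)
    simp only [Finset.sum_const, Finset.card_univ, Fintype.card_fin, nsmul_eq_mul,
      mul_neg_one] at h
    linarith
  have ha : ∀ i, (0:ℝ) < αv i + 1 := fun i => by linarith [hαv i]
  set sq : ℕ → ℝ := fun k => (1/2)^(k+1) / n with hsq_def
  have hs0 : ∀ k, 0 < sq k := sq_pos n hn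
  have hs12 : ∀ k, sq k ≤ 1/2 := sq_le_half n hn
  set A : ℝ := γ * (((n:ℝ) ^ (-(αv j + 1)) / (αv j + 1)) *
    ∏ i ∈ Finset.univ.erase j, ((1/2:ℝ) ^ (αv i + 1) / (αv i + 1))) with hA_def
  have hA0 : 0 < A := by
    refine mul_pos hγ (mul_pos (div_pos (Real.rpow_pos_of_pos (by linarith) _) (ha j)) ?_)
    exact Finset.prod_pos fun i _ => div_pos (Real.rpow_pos_of_pos (by norm_num) _) (ha i)
  have hIlb : ∀ k, A * (sq k) ^ (-(αv j + 1))
      ≤ ∫ y in Rset n (wpt n j (sq k)) 1, γ * ∏ i, y i ^ αv i := by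
    intro k
    have hw := wpt_pos n hn j (hs0 k) (hs12 k)
    refine le_trans ?_ (Rset_integral_ge n hn γ hγ αv hαv _ hw)
    rw [hA_def, mul_assoc]
    exact mul_le_mul_of_nonneg_left (prod_bound n hn αv hαv j (hs0 k) (hs12 k)) hγ.le
  set u : ℕ → ℝ := fun k =>
    c ^ ((n:ℝ) + ∑ i, αv i) * (A * (sq k) ^ (-(αv j + 1))) with hu_def
  have hmono : ∀ k, P (⋂ k', {ω | c ≤ Ψ ω (wpt n j (sq k'))})
      ≤ ENNReal.ofReal (Real.exp (-(u k))) := by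
    intro k
    refine le_trans (measure_mono (Set.iInter_subset _ k)) ?_
    rw [htail _ (wpt_mem_open n hn j (hs0 k) (hs12 k)) _ hc]
    apply ENNReal.ofReal_le_ofReal
    apply Real.exp_le_exp.2
    apply neg_le_neg
    exact mul_le_mul_of_nonneg_left (hIlb k) (Real.rpow_pos_of_pos hc _).le
  have hinv : ∀ k : ℕ, (sq k)⁻¹ = (2:ℝ)^(k+1) * n := by
    intro k
    show (((1:ℝ)/2)^(k+1) / n)⁻¹ = (2:ℝ)^(k+1) * n
    rw [one_div, inv_pow, div_eq_mul_inv, mul_inv, inv_inv, inv_inv]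
  have hgeo : Filter.Tendsto (fun k => (sq k)⁻¹) Filter.atTop Filter.atTop := by
    have h2 : Filter.Tendsto (fun k : ℕ => (2:ℝ)^(k+1)) Filter.atTop Filter.atTop :=
      (tendsto_pow_atTop_atTop_of_one_lt (by norm_num : (1:ℝ) < 2)).comp
        (Filter.tendsto_add_atTop_nat 1)
    exact Filter.Tendsto.congr (fun k => (hinv k).symm)
      (h2.atTop_mul_const (by linarith : (0:ℝ) < n))
  have hpow : Filter.Tendsto (fun k => (sq k) ^ (-(αv j + 1))) Filter.atTop Filter.atTop := by
    have heq : ∀ k, ((sq k)⁻¹) ^ (αv j + 1) = (sq k) ^ (-(αv j + 1)) := fun k => by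
      rw [Real.inv_rpow (hs0 k).le, ← Real.rpow_neg (hs0 k).le]
    exact Filter.Tendsto.congr heq ((tendsto_rpow_atTop (ha j)).comp hgeo)
  have hu_tend : Filter.Tendsto u Filter.atTop Filter.atTop :=
    (hpow.const_mul_atTop hA0).const_mul_atTop
      (Real.rpow_pos_of_pos hc ((n:ℝ) + ∑ i, αv i))
  have hofr : Filter.Tendsto (fun k => ENNReal.ofReal (Real.exp (-(u k))))
      Filter.atTop (nhds 0) := by
    have h1 : Filter.Tendsto (fun k => Real.exp (-(u k))) Filter.atTop (nhds 0) :=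
      Real.tendsto_exp_atBot.comp (Filter.tendsto_neg_atTop_atBot.comp hu_tend)
    simpa using ENNReal.tendsto_ofReal h1
  exact le_antisymm (ge_of_tendsto hofr (Filter.Eventually.of_forall hmono)) zero_le


/-- let `h(x) = γ ∏ x_i^{α_i}` with `γ > 0`, `α_i > −1`, `α = ∑ α_i`,
and let `Ψ` be a random nonnegative continuous concave function on `Δ̄_n` such that
`ℙ(Ψ(p) ≥ x) = exp(−x^{n+α} ∫_{R(p,1)} h)` for all `p ∈ Δ_n`, `x > 0`. Then almost
surely `Ψ` vanishes identically on `∂Δ_n = Δ̄_n ∖ Δ_n`. -/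
theorem random_concave_vanishes_on_boundary (n : ℕ) (hn : 2 ≤ n)
    (γ : ℝ) (hγ : 0 < γ) (αv : Fin n → ℝ) (hαv : ∀ i, -1 < αv i)
    {Ω : Type*} [MeasurableSpace Ω] (P : Measure Ω) [IsProbabilityMeasure P]
    (Ψ : Ω → (Fin n → ℝ) → ℝ)
    (hΨcont : ∀ ω, ContinuousOn (Ψ ω) (closedSimplex n))
    (hΨconc : ∀ ω, ConcaveOn ℝ (closedSimplex n) (Ψ ω))
    (hΨnonneg : ∀ ω, ∀ p ∈ closedSimplex n, 0 ≤ Ψ ω p)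
    (hΨmeas : ∀ p : Fin n → ℝ, Measurable (fun ω => Ψ ω p))
    (htail : ∀ p ∈ openSimplex n, ∀ x : ℝ, 0 < x →
      P {ω | x ≤ Ψ ω p} = ENNReal.ofReal (Real.exp
        (-(x ^ ((n : ℝ) + ∑ i, αv i) *
          ∫ y in Rset n p 1, γ * ∏ i, y i ^ αv i)))) :
    ∀ᵐ ω ∂P, ∀ p ∈ closedSimplex n \ openSimplex n, Ψ ω p = 0 := by
  have hn0 : 0 < n := lt_of_lt_of_le (by norm_num) hn
  have hnR : (2:ℝ) ≤ (n:ℝ) := by exact_mod_cast hn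
  rw [MeasureTheory.ae_iff]
  refine measure_mono_null (t := ⋃ (j : Fin n), ⋃ (m : ℕ), ⋂ (k : ℕ),
      {ω | (1/((m:ℝ)+1)) / (4 * ((n:ℝ)-1)) ≤ Ψ ω (wpt n j ((1/2)^(k+1)/n))}) ?_
    (measure_iUnion_null fun j => measure_iUnion_null fun m =>
      null_aux n hn γ hγ αv hαv P Ψ htail j _
        (div_pos (by positivity) (by linarith)))
  intro ω hω
  simp only [Set.mem_setOf_eq] at hω
  push_neg at hω
  obtain ⟨q, hq, hΨq⟩ := hω
  have hqc := hq.1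
  have hqpos : 0 < Ψ ω q := lt_of_le_of_ne (hΨnonneg ω q hqc) (Ne.symm hΨq)
  have hzero : ∃ j, q j = 0 := by
    by_contra hcon
    push_neg at hcon
    have hqp : ∀ i, 0 < q i := fun i => lt_of_le_of_ne (hqc.1 i) (Ne.symm (hcon i))
    refine hq.2 ⟨fun i => ⟨hqp i, ?_⟩, hqc.2⟩
    obtain ⟨i', hi'⟩ := Fintype.exists_ne_of_one_lt_card
      (by simpa using (by omega : 1 < n) : 1 < Fintype.card (Fin n)) i
    have h1 : q i ≤ ∑ k ∈ Finset.univ.erase i', q k :=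
      Finset.single_le_sum (fun k _ => hqc.1 k)
        (Finset.mem_erase.2 ⟨(Ne.symm hi'), Finset.mem_univ i⟩)
    have h2 : q i' + ∑ k ∈ Finset.univ.erase i', q k = 1 := by
      rw [Finset.add_sum_erase _ _ (Finset.mem_univ i')]; exact hqc.2
    linarith [hqp i']
  obtain ⟨j, hj⟩ := hzero
  obtain ⟨m, hm⟩ := exists_nat_one_div_lt hqpos
  simp only [Set.mem_iUnion, Set.mem_iInter, Set.mem_setOf_eq]
  refine ⟨j, m, fun k => ?_⟩
  have ht0 : (0:ℝ) < (1/2:ℝ)^(k+1) := by positivity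
  have ht1 : ((1/2:ℝ))^(k+1) ≤ 1/2 := by
    calc ((1/2:ℝ))^(k+1) ≤ (1/2:ℝ)^1 :=
          pow_le_pow_of_le_one (by norm_num) (by norm_num) (by omega)
      _ = 1/2 := pow_one _
  have hpush := concave_boundary_push n hn (hΨconc ω) (hΨnonneg ω) hqc hj ht0 ht1
  have hstep : (1/((m:ℝ)+1)) / (4 * ((n:ℝ)-1)) ≤ Ψ ω q / (4 * ((n:ℝ)-1)) := by
    have h4 : (0:ℝ) < 4 * ((n:ℝ)-1) := by linarith
    exact (div_le_div_iff_of_pos_right h4).2 hm.le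
  exact le_trans hstep hpush
end
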